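/- arXiv:1911.04892 — 7 statements merged into one kernel-verified Lean document; each statement's English description precedes it below -/
import Mathlib

section
/- Let X be a reflexive real Banach space and A : X ⇒ X* a maximal monotone operator. Then for every x ∈ D(A) and every v ∈ X \ {0}, one has the inclusions Limsup_{w→v, t↓0} A(x+tw) ⊆ w-Limsup_{w→v, t↓0} A(x+tw) ⊆ A(x;v). -/
open Filter Topology Pointwise

variable {X : Type*} [NormedAddCommGroup X] [NormedSpace ℝ X]

/-- A set-valued operator `A : X ⇒ X*` is monotone if
`⟨x* − y*, x − y⟩ ≥ 0` for all pairs in its graph. -/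
def IsMonotoneOp (A : X → Set (StrongDual ℝ X)) : Prop :=
  ∀ ⦃x y : X⦄ ⦃x' y' : StrongDual ℝ X⦄, x' ∈ A x → y' ∈ A y → 0 ≤ (x' - y') (x - y)

/-- A monotone operator is maximal monotone if its graph has no proper monotone extension. -/
def IsMaxMonotoneOp (A : X → Set (StrongDual ℝ X)) : Prop :=
  IsMonotoneOp A ∧ ∀ B : X → Set (StrongDual ℝ X), IsMonotoneOp B → (∀ x, A x ⊆ B x) → B = A

/-- The domain `D(A)` of a set-valued operator. -/
def opDom (A : X → Set (StrongDual ℝ X)) : Set X := {x | (A x).Nonempty}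

/-- `X` is reflexive: the canonical embedding into the double dual is surjective. -/
def IsReflexiveSp (X : Type*) [NormedAddCommGroup X] [NormedSpace ℝ X] : Prop :=
  Function.Surjective (NormedSpace.inclusionInDoubleDual ℝ X)

/-- Support function `σ_S(v) = sup {⟨s,v⟩ : s ∈ S}`, with values in `EReal`. -/
noncomputable def suppFn (S : Set (StrongDual ℝ X)) (v : X) : EReal :=
  ⨆ s ∈ S, ((s v : ℝ) : EReal)

/-- The face `A(x;v) = {x* ∈ Ax : ⟨x*,v⟩ = σ_{Ax}(v)}`. -/
def face (A : X → Set (StrongDual ℝ X)) (x v : X) : Set (StrongDual ℝ X) :=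
  {p | p ∈ A x ∧ ((p v : ℝ) : EReal) = suppFn (A x) v}

/-- Weak convergence of a sequence of functionals (in a reflexive space this coincides with
pointwise convergence on `X`). -/
def WeakLim (u : ℕ → StrongDual ℝ X) (p : StrongDual ℝ X) : Prop :=
  ∀ z : X, Tendsto (fun n => u n z) atTop (𝓝 (p z))

/-- Strong outer limit `Limsup_{w→v, t↓0} A(x+tw)`. -/
def strongLimsup (A : X → Set (StrongDual ℝ X)) (x v : X) :
    Set (StrongDual ℝ X) :=
  {p | ∃ (w : ℕ → X) (t : ℕ → ℝ) (q : ℕ → StrongDual ℝ X),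
    Tendsto w atTop (𝓝 v) ∧ (∀ n, 0 < t n) ∧ Tendsto t atTop (𝓝 0) ∧
    (∀ n, q n ∈ A (x + t n • w n)) ∧ Tendsto q atTop (𝓝 p)}

/-- Weak outer limit `w-Limsup_{w→v, t↓0} A(x+tw)`. -/
def weakLimsup (A : X → Set (StrongDual ℝ X)) (x v : X) :
    Set (StrongDual ℝ X) :=
  {p | ∃ (w : ℕ → X) (t : ℕ → ℝ) (q : ℕ → StrongDual ℝ X),
    Tendsto w atTop (𝓝 v) ∧ (∀ n, 0 < t n) ∧ Tendsto t atTop (𝓝 0) ∧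
    (∀ n, q n ∈ A (x + t n • w n)) ∧ WeakLim q p}

/-- `A0` is the minimal-norm selection of `A`. -/
def IsMinNormSelection (A : X → Set (StrongDual ℝ X)) (A0 : X → StrongDual ℝ X) :
    Prop :=
  ∀ x ∈ opDom A, A0 x ∈ A x ∧ ∀ q ∈ A x, ‖A0 x‖ ≤ ‖q‖

/-- Weak outer limit of a (single-valued) selection along points of `D`:
`w-Limsup_{w→v, t↓0, x+tw∈D} Ã(x+tw)`. -/
def weakLimsupSel (A0 : X → StrongDual ℝ X) (D : Set X) (x v : X) :
    Set (StrongDual ℝ X) :=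
  {p | ∃ (w : ℕ → X) (t : ℕ → ℝ),
    Tendsto w atTop (𝓝 v) ∧ (∀ n, 0 < t n) ∧ Tendsto t atTop (𝓝 0) ∧
    (∀ n, x + t n • w n ∈ D) ∧ WeakLim (fun n => A0 (x + t n • w n)) p}

/-- Tangent cone `T(x;S) = closure (⋃_{t>0} t⁻¹ (S − x))`. -/
def tanCone (S : Set X) (x : X) : Set X :=
  closure {v : X | ∃ t : ℝ, 0 < t ∧ x + t • v ∈ S}

/-- Normal cone `N(x;S)` (empty when `x ∉ S`). -/
def normalCone (S : Set X) (x : X) : Set (StrongDual ℝ X) :=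
  {p | x ∈ S ∧ ∀ y ∈ S, p (y - x) ≤ 0}

/-- The set of sequential lower limits `liminf_n ⟨A0(x+t_n w_n), w_n⟩` over all sequences
`w_n → v`, `t_n ↓ 0` with `x + t_n w_n ∈ D`. -/
noncomputable def seqLiminfSet (A0 : X → StrongDual ℝ X) (D : Set X) (x v : X) :
    Set EReal :=
  {l | ∃ (w : ℕ → X) (t : ℕ → ℝ),
    Tendsto w atTop (𝓝 v) ∧ (∀ n, 0 < t n) ∧ Tendsto t atTop (𝓝 0) ∧
    (∀ n, x + t n • w n ∈ D) ∧
    l = liminf (fun n => (((A0 (x + t n • w n)) (w n) : ℝ) : EReal)) atTop}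

private lemma weakLim_apply_tendsto {q : ℕ → StrongDual ℝ X} {p : StrongDual ℝ X}
    {C : ℝ} (hC : ∀ n, ‖q n‖ ≤ C) (hwl : WeakLim q p)
    {y : ℕ → X} {yl : X} (hy : Tendsto y atTop (𝓝 yl)) :
    Tendsto (fun n => q n (y n)) atTop (𝓝 (p yl)) := by
  have hdiff : Tendsto (fun n => q n (y n) - q n yl) atTop (𝓝 0) := by
    refine squeeze_zero_norm (a := fun n => C * ‖y n - yl‖) (fun n => ?_) ?_
    · have h1 : q n (y n) - q n yl = q n (y n - yl) := by rw [map_sub]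
      rw [h1]
      exact ((q n).le_opNorm _).trans (mul_le_mul_of_nonneg_right (hC n) (norm_nonneg _))
    · have h2 : Tendsto (fun n => y n - yl) atTop (𝓝 0) :=
        tendsto_sub_nhds_zero_iff.mpr hy
      simpa using tendsto_const_nhds.mul h2.norm
  simpa using hdiff.add (hwl yl)

private lemma weakLim_bound [CompleteSpace X] {q : ℕ → StrongDual ℝ X}
    {p : StrongDual ℝ X} (hwl : WeakLim q p) : ∃ C, ∀ n, ‖q n‖ ≤ C :=
  banach_steinhaus fun z => by
    obtain ⟨C, hC⟩ := (hwl z).norm.bddAbove_range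
    exact ⟨C, fun n => hC ⟨n, rfl⟩⟩

/-- In a reflexive Banach space, for a maximal monotone operator `A` one has
`Limsup ⊆ w-Limsup ⊆ A(x;v)` for every `x ∈ D(A)` and `v ≠ 0`. -/
theorem strongLimsup_subset_weakLimsup_subset_face
    [CompleteSpace X] (hrefl : IsReflexiveSp X)
    (A : X → Set (StrongDual ℝ X)) (hA : IsMaxMonotoneOp A) :
    ∀ x ∈ opDom A, ∀ v : X, v ≠ 0 →
      strongLimsup A x v ⊆ weakLimsup A x v ∧ weakLimsup A x v ⊆ face A x v := by
  intro x hx v hv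
  constructor
  · rintro p ⟨w, t, q, hw, htpos, ht0, hqmem, hlim⟩
    refine ⟨w, t, q, hw, htpos, ht0, hqmem, fun z => ?_⟩
    have hcont : Continuous fun f : StrongDual ℝ X => f z :=
      (ContinuousLinearMap.apply ℝ ℝ z).continuous
    exact (hcont.tendsto p).comp hlim
  · rintro p ⟨w, t, q, hw, htpos, ht0, hqmem, hwl⟩
    obtain ⟨C, hC⟩ := weakLim_bound hwl
    set u : ℕ → X := fun n => x + t n • w n with hu
    have hulim : Tendsto u atTop (𝓝 x) := by
      have h1 : Tendsto (fun n => t n • w n) atTop (𝓝 ((0 : ℝ) • v)) := ht0.smul hw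
      simpa using tendsto_const_nhds.add h1
    -- key inequality against all points of the graph
    have key : ∀ (y : X) (b : StrongDual ℝ X), b ∈ A y → 0 ≤ (p - b) (x - y) := by
      intro y b hb
      have hmono : ∀ n, 0 ≤ (q n - b) (u n - y) := fun n => hA.1 (hqmem n) hb
      have hwl' : WeakLim (fun n => q n - b) (p - b) := fun z => by
        simpa [ContinuousLinearMap.sub_apply] using (hwl z).sub tendsto_const_nhds
      have hC' : ∀ n, ‖q n - b‖ ≤ C + ‖b‖ := fun n =>
        (norm_sub_le _ _).trans (add_le_add_left (hC n) _)
      exact ge_of_tendsto' (weakLim_apply_tendsto hC' hwl' (hulim.sub_const y)) hmono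
    -- by maximality, p ∈ A x
    have hpA : p ∈ A x := by
      set B : X → Set (StrongDual ℝ X) :=
        fun y => A y ∪ {p' | y = x ∧ p' = p} with hB
      have hBmono : IsMonotoneOp B := by
        rintro y1 y2 a b (ha | ⟨rfl, rfl⟩) (hb | ⟨rfl, rfl⟩)
        · exact hA.1 ha hb
        · have h1 := key y1 a ha
          simp only [ContinuousLinearMap.sub_apply, map_sub] at h1 ⊢
          linarith
        · have h1 := key y2 b hb
          simp only [ContinuousLinearMap.sub_apply, map_sub] at h1 ⊢
          linarith
        · simp
      have hBeq : B = A := hA.2 B hBmono fun y => Set.subset_union_left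
      have hpB : p ∈ B x := Or.inr ⟨rfl, rfl⟩
      rwa [hBeq] at hpB
    -- p maximizes ⟨·, v⟩ over A x
    have hge : ∀ s ∈ A x, s v ≤ p v := by
      intro s hs
      have hmono : ∀ n, 0 ≤ (q n - s) (w n) := by
        intro n
        have h1 : 0 ≤ (q n - s) (u n - x) := hA.1 (hqmem n) hs
        have h2 : (q n - s) (u n - x) = t n * (q n - s) (w n) := by
          have : u n - x = t n • w n := by simp [hu]
          rw [this, map_smul, smul_eq_mul]
        rw [h2] at h1
        exact nonneg_of_mul_nonneg_right h1 (htpos n)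
      have hwl' : WeakLim (fun n => q n - s) (p - s) := fun z => by
        simpa [ContinuousLinearMap.sub_apply] using (hwl z).sub tendsto_const_nhds
      have hC' : ∀ n, ‖q n - s‖ ≤ C + ‖s‖ := fun n =>
        (norm_sub_le _ _).trans (add_le_add_left (hC n) _)
      have h3 : 0 ≤ (p - s) v :=
        ge_of_tendsto' (weakLim_apply_tendsto hC' hwl' hw) hmono
      simp only [ContinuousLinearMap.sub_apply] at h3
      linarith
    refine ⟨hpA, ?_⟩
    refine le_antisymm ?_ ?_
    · exact le_iSup₂ (f := fun s (_ : s ∈ A x) => ((s v : ℝ) : EReal)) p hpA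
    · exact iSup₂_le fun s hs => EReal.coe_le_coe_iff.mpr (hge s hs)
end

section
/- Let X be a reflexive real Banach space and A : X ⇒ X* a maximal monotone operator. Then for every x ∈ D(A), the norm-boundary of the set Ax in X* equals the norm-closure of the union ∪_{v ∈ X \ {0}} A(x;v) of all faces of Ax in nonzero directions. -/
open Filter Topology Pointwise

variable {X : Type*} [NormedAddCommGroup X] [NormedSpace ℝ X]

set_option maxHeartbeats 1000000

section BP
variable {E : Type*} [NormedAddCommGroup E] [NormedSpace ℝ E] [CompleteSpace E]

/-- Bishop–Phelps: near any non-interior point of a closed convex set there is a support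
point with a nonzero supporting functional. -/
lemma bishop_phelps_aux {C : Set E} (hC : IsClosed C) (hconv : Convex ℝ C) {p : E}
    (hp : p ∈ C) (hpi : p ∉ interior C) {ε : ℝ} (hε : 0 < ε) :
    ∃ c ∈ C, ∃ h : E →L[ℝ] ℝ, h ≠ 0 ∧ (∀ s ∈ C, h s ≤ h c) ∧ ‖c - p‖ < ε := by
  classical
  set δ : ℝ := ε / 4 with hδdef
  have hδ : 0 < δ := by positivity
  obtain ⟨z, hzball, hzC⟩ : ∃ z, z ∈ Metric.ball p δ ∧ z ∉ C := by
    by_contra hcon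
    push_neg at hcon
    exact hpi (mem_interior_iff_mem_nhds.2
      (Filter.mem_of_superset (Metric.ball_mem_nhds p hδ) hcon))
  obtain ⟨f₀, u, hfu, huz⟩ := geometric_hahn_banach_closed_point hconv hC hzC
  have hf₀ : f₀ ≠ 0 := by
    intro h0
    have h1 := hfu p hp
    rw [h0] at h1 huz
    simp at h1 huz
    linarith
  have hn : 0 < ‖f₀‖ := norm_pos_iff.2 hf₀
  set f : E →L[ℝ] ℝ := ‖f₀‖⁻¹ • f₀ with hfdef
  have hfnorm : ‖f‖ = 1 := by
    rw [hfdef, norm_smul ‖f₀‖⁻¹ f₀, norm_inv, norm_norm]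
    exact inv_mul_cancel₀ hn.ne'
  have hbound : ∀ s ∈ C, f s ≤ f p + δ := by
    intro s hs
    have h1 : f₀ s < f₀ z := lt_trans (hfu s hs) huz
    have h2 : f s < f z := by
      simp only [hfdef, ContinuousLinearMap.smul_apply, smul_eq_mul]
      exact mul_lt_mul_of_pos_left h1 (inv_pos.2 hn)
    have h3 : f z - f p ≤ ‖z - p‖ := by
      calc f z - f p = f (z - p) := by rw [map_sub]
        _ ≤ |f (z - p)| := le_abs_self _
        _ ≤ ‖f‖ * ‖z - p‖ := f.le_opNorm _
        _ = ‖z - p‖ := by rw [hfnorm, one_mul]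
    have h4 : ‖z - p‖ < δ := by
      rw [← dist_eq_norm]
      exact Metric.mem_ball.1 hzball
    linarith
  set S : E → Set E := fun a => {x | x ∈ C ∧ 2⁻¹ * ‖x - a‖ ≤ f x - f a} with hSdef
  have hself : ∀ a ∈ C, a ∈ S a := fun a ha => ⟨ha, by simp⟩
  have hSsub : ∀ a, S a ⊆ C := fun a x hx => hx.1
  have htrans : ∀ a b, b ∈ S a → S b ⊆ S a := by
    intro a b hb x hx
    refine ⟨hx.1, ?_⟩
    have h1 := hb.2
    have h2 := hx.2
    have h3 : ‖x - a‖ ≤ ‖x - b‖ + ‖b - a‖ := norm_sub_le_norm_sub_add_norm_sub x b a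
    linarith
  have hSclosed : ∀ a, IsClosed (S a) := by
    intro a
    have : S a = C ∩ {x | 2⁻¹ * ‖x - a‖ ≤ f x - f a} := rfl
    rw [this]
    exact hC.inter (isClosed_le (by fun_prop) (by fun_prop))
  have key : ∀ (n : ℕ) (a : E), ∃ b, a ∈ C → b ∈ S a ∧ ∀ x ∈ S a, f x < f b + (2⁻¹ : ℝ) ^ n := by
    intro n a
    by_cases ha : a ∈ C
    · have hne : (f '' S a).Nonempty := ⟨f a, a, hself a ha, rfl⟩
      have hbdd : BddAbove (f '' S a) :=
        ⟨f p + δ, by rintro _ ⟨x, hx, rfl⟩; exact hbound x (hSsub a hx)⟩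
      have hpow : (0:ℝ) < (2⁻¹:ℝ) ^ n := by positivity
      obtain ⟨y, ⟨b, hb, rfl⟩, hy⟩ := exists_lt_of_lt_csSup hne
        (show sSup (f '' S a) - (2⁻¹:ℝ) ^ n < sSup (f '' S a) by linarith)
      exact ⟨b, fun _ => ⟨hb, fun x hx =>
        lt_of_le_of_lt (le_csSup hbdd ⟨x, hx, rfl⟩) (by linarith)⟩⟩
    · exact ⟨a, fun h => absurd h ha⟩
  choose F hF using key
  set c : ℕ → E := fun n => Nat.rec p (fun n a => F n a) n with hcdef
  have hc0 : c 0 = p := rfl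
  have hcC : ∀ n, c n ∈ C := by
    intro n
    induction n with
    | zero => exact hp
    | succ n ih => exact hSsub _ ((hF n (c n) ih).1)
  have hstep : ∀ n, c (n + 1) ∈ S (c n) := fun n => (hF n (c n) (hcC n)).1
  have hnear : ∀ n, ∀ x ∈ S (c n), f x < f (c (n + 1)) + (2⁻¹:ℝ) ^ n :=
    fun n => (hF n (c n) (hcC n)).2
  have hchain : ∀ n m, n ≤ m → c m ∈ S (c n) := by
    intro n m h
    induction m, h using Nat.le_induction with
    | base => exact hself _ (hcC n)
    | succ m hm ih => exact htrans _ _ ih (hstep m)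
  have hsmall : ∀ n, ∀ x ∈ S (c (n + 1)), ‖x - c (n + 1)‖ ≤ 2 * (2⁻¹:ℝ) ^ n := by
    intro n x hx
    have h1 : x ∈ S (c n) := htrans _ _ (hstep n) hx
    have h2 := hnear n x h1
    have h3 := hx.2
    linarith
  have hcauchy : CauchySeq c := by
    rw [Metric.cauchySeq_iff']
    intro r hr
    obtain ⟨k, hk⟩ : ∃ k : ℕ, 2 * (2⁻¹:ℝ) ^ k < r := by
      obtain ⟨k, hk⟩ := exists_pow_lt_of_lt_one (show (0:ℝ) < r / 2 by positivity)
        (show (2⁻¹:ℝ) < 1 by norm_num)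
      exact ⟨k, by linarith⟩
    refine ⟨k + 1, fun n hn => ?_⟩
    have h1 := hsmall k (c n) (hchain (k + 1) n hn)
    rw [dist_eq_norm]
    linarith
  obtain ⟨cl, hcl⟩ := cauchySeq_tendsto_of_complete hcauchy
  have hclC : cl ∈ C := hC.mem_of_tendsto hcl (Filter.Eventually.of_forall hcC)
  have hclS : ∀ n, cl ∈ S (c n) := fun n =>
    (hSclosed (c n)).mem_of_tendsto hcl
      (Filter.eventually_atTop.2 ⟨n, fun m hm => hchain n m hm⟩)
  have huniq : ∀ x ∈ C, 2⁻¹ * ‖x - cl‖ ≤ f x - f cl → x = cl := by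
    intro x hxC hxle
    have hxS : ∀ n, x ∈ S (c n) := fun n => htrans _ _ (hclS n) ⟨hxC, hxle⟩
    have hlt : ∀ r : ℝ, 0 < r → dist x cl < r := by
      intro r hr
      obtain ⟨k, hk⟩ : ∃ k : ℕ, 2 * (2⁻¹:ℝ) ^ k < r / 2 := by
        obtain ⟨k, hk⟩ := exists_pow_lt_of_lt_one (show (0:ℝ) < r / 4 by positivity)
          (show (2⁻¹:ℝ) < 1 by norm_num)
        exact ⟨k, by linarith⟩
      obtain ⟨N, hN⟩ := (Metric.tendsto_atTop.1 hcl) (r / 2) (by positivity)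
      set n : ℕ := max k N with hndef
      have h1 : ‖x - c (n + 1)‖ ≤ 2 * (2⁻¹:ℝ) ^ n := hsmall n x (hxS (n + 1))
      have h2 : (2⁻¹:ℝ) ^ n ≤ (2⁻¹:ℝ) ^ k :=
        pow_le_pow_of_le_one (by norm_num) (by norm_num) (le_max_left _ _)
      have h3 : dist (c (n + 1)) cl < r / 2 := hN (n + 1) (le_trans (le_max_right _ _) (Nat.le_succ_of_le le_rfl))
      calc dist x cl ≤ dist x (c (n + 1)) + dist (c (n + 1)) cl := dist_triangle _ _ _
        _ < 2 * (2⁻¹:ℝ) ^ k + r / 2 := by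
            rw [dist_eq_norm]
            have : 2 * (2⁻¹:ℝ) ^ n ≤ 2 * (2⁻¹:ℝ) ^ k := by linarith
            linarith
        _ < r := by linarith
    have : dist x cl ≤ 0 := by
      by_contra hcon
      push_neg at hcon
      exact absurd (hlt (dist x cl) hcon) (lt_irrefl _)
    exact eq_of_dist_eq_zero (le_antisymm this dist_nonneg)
  have hdistp : ‖cl - p‖ ≤ 2 * δ := by
    have h0 : 2⁻¹ * ‖cl - p‖ ≤ f cl - f p := by
      have := (hclS 0).2
      rwa [hc0] at this
    have hb := hbound cl hclC
    linarith
  set U : Set E := {x | 2⁻¹ * ‖x - cl‖ < f x - f cl} with hUdef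
  have hUopen : IsOpen U := isOpen_lt (by fun_prop) (by fun_prop)
  have hUconv : Convex ℝ U := by
    rw [convex_iff_forall_pos]
    intro x hx y hy a b ha hb hab
    simp only [hUdef, Set.mem_setOf_eq] at hx hy ⊢
    have hcomb : a • x + b • y - cl = a • (x - cl) + b • (y - cl) := by
      have h' : a • (x - cl) + b • (y - cl) = a • x + b • y - (a • cl + b • cl) := by
        rw [smul_sub, smul_sub]; abel
      rw [h', ← add_smul, hab, one_smul]
    have h1 : ‖a • x + b • y - cl‖ ≤ a * ‖x - cl‖ + b * ‖y - cl‖ := by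
      rw [hcomb]
      calc ‖a • (x - cl) + b • (y - cl)‖ ≤ ‖a • (x - cl)‖ + ‖b • (y - cl)‖ := norm_add_le _ _
        _ = a * ‖x - cl‖ + b * ‖y - cl‖ := by
            rw [norm_smul, norm_smul, Real.norm_of_nonneg ha.le, Real.norm_of_nonneg hb.le]
    have h2 : f (a • x + b • y) = a * f x + b * f y := by
      simp [map_add, map_smul, smul_eq_mul]
    have h3 : a * (2⁻¹ * ‖x - cl‖) < a * (f x - f cl) := by
      exact mul_lt_mul_of_pos_left hx ha
    have h4 : b * (2⁻¹ * ‖y - cl‖) < b * (f y - f cl) := by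
      exact mul_lt_mul_of_pos_left hy hb
    have h5 : a * f cl + b * f cl = f cl := by rw [← add_mul, hab, one_mul]
    nlinarith
  obtain ⟨w₀, hw₀n, hw₀⟩ := f.exists_lt_apply_of_lt_opNorm
    (show (2⁻¹:ℝ) < ‖f‖ by rw [hfnorm]; norm_num)
  set w : E := if 0 ≤ f w₀ then w₀ else -w₀ with hwdef
  have hwn : ‖w‖ ≤ 1 := by
    rw [hwdef]; split <;> simpa using hw₀n.le
  have hfw : (2⁻¹:ℝ) < f w := by
    rw [hwdef]
    split
    next h => rwa [Real.norm_eq_abs, abs_of_nonneg h] at hw₀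
    next h =>
      push_neg at h
      rw [map_neg]
      rwa [Real.norm_eq_abs, abs_of_neg h] at hw₀
  have hray : ∀ t : ℝ, 0 < t → cl + t • w ∈ U := by
    intro t ht
    simp only [hUdef, Set.mem_setOf_eq]
    have h1 : cl + t • w - cl = t • w := by abel
    rw [h1, norm_smul, Real.norm_of_nonneg ht.le, map_add, map_smul, smul_eq_mul]
    have h2 : 2⁻¹ * (t * ‖w‖) ≤ 2⁻¹ * t := by nlinarith
    nlinarith
  have hdisj : Disjoint U C := by
    rw [Set.disjoint_left]
    intro x hxU hxC
    have hx := huniq x hxC (le_of_lt hxU)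
    rw [hx] at hxU
    simp only [hUdef, Set.mem_setOf_eq, sub_self, norm_zero, mul_zero] at hxU
    exact lt_irrefl _ hxU
  obtain ⟨g, u₀, hg1, hg2⟩ := geometric_hahn_banach_open hUconv hUopen hconv hdisj
  have hclU : cl ∈ closure U := by
    rw [Metric.mem_closure_iff]
    intro r hr
    refine ⟨cl + (r / 2) • w, hray _ (by positivity), ?_⟩
    rw [dist_eq_norm]
    have h1 : cl - (cl + (r / 2) • w) = -((r / 2) • w) := by abel
    rw [h1, norm_neg, norm_smul, Real.norm_of_nonneg (by positivity : (0:ℝ) ≤ r / 2)]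
    nlinarith
  have hgcl : g cl ≤ u₀ :=
    (closure_minimal (fun a ha => (hg1 a ha).le)
      (isClosed_le g.continuous continuous_const)) hclU
  refine ⟨cl, hclC, -g, ?_, ?_, ?_⟩
  · intro h0
    have hg0 : g = 0 := by rwa [neg_eq_zero] at h0
    have h1 := hg1 (cl + 1 • w) (hray 1 one_pos)
    have h2 := hg2 cl hclC
    rw [hg0] at h1 h2
    simp at h1 h2
    linarith
  · intro s hs
    simp only [ContinuousLinearMap.neg_apply, neg_le_neg_iff]
    exact le_trans hgcl (hg2 s hs)
  · rw [hδdef] at hdistp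
    linarith

end BP

section MM

lemma maxMono_mem_of_tests {A : X → Set (StrongDual ℝ X)} (hA : IsMaxMonotoneOp A)
    {x : X} {p : StrongDual ℝ X}
    (h : ∀ y, ∀ q ∈ A y, 0 ≤ (p - q) (x - y)) : p ∈ A x := by
  classical
  set B : X → Set (StrongDual ℝ X) :=
    fun y => A y ∪ {p' | y = x ∧ p' = p} with hB
  have hBmono : IsMonotoneOp B := by
    rintro y z x' y' (hx' | ⟨hx1, hx2⟩) (hy' | ⟨hy1, hy2⟩)
    · exact hA.1 hx' hy'
    · rw [hy1, hy2]
      have h1 := h y x' hx'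
      have h2 : (x' - p) (y - x) = (p - x') (x - y) := by
        rw [show y - x = -(x - y) from (neg_sub x y).symm, map_neg,
          show x' - p = -(p - x') from (neg_sub p x').symm]
        simp
      rw [h2]; exact h1
    · rw [hx1, hx2]
      exact h z y' hy'
    · rw [hx1, hx2, hy1, hy2]
      simp
  have hBeq := hA.2 B hBmono (fun y => Set.subset_union_left)
  have hpB : p ∈ B x := Or.inr ⟨rfl, rfl⟩
  rwa [hBeq] at hpB

lemma maxMono_char {A : X → Set (StrongDual ℝ X)} (hA : IsMaxMonotoneOp A) (x : X) :
    A x = ⋂ (y : X), ⋂ q ∈ A y, {p : StrongDual ℝ X | 0 ≤ (p - q) (x - y)} := by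
  ext p
  simp only [Set.mem_iInter, Set.mem_setOf_eq]
  exact ⟨fun hp y q hq => hA.1 hp hq, fun h => maxMono_mem_of_tests hA h⟩

lemma maxMono_isClosed {A : X → Set (StrongDual ℝ X)} (hA : IsMaxMonotoneOp A) (x : X) :
    IsClosed (A x) := by
  rw [maxMono_char hA x]
  refine isClosed_iInter fun y => isClosed_iInter fun q => isClosed_iInter fun _ => ?_
  have hc : Continuous fun p : StrongDual ℝ X => (p - q) (x - y) := by
    have h1 : (fun p : StrongDual ℝ X => (p - q) (x - y))
        = fun p : StrongDual ℝ X => p (x - y) - q (x - y) := by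
      ext p; simp
    rw [h1]
    have h2 : Continuous fun p : StrongDual ℝ X => p (x - y) := by
      exact (NormedSpace.inclusionInDoubleDual ℝ X (x - y)).continuous
    exact h2.sub continuous_const
  exact isClosed_le continuous_const hc

lemma maxMono_convex {A : X → Set (StrongDual ℝ X)} (hA : IsMaxMonotoneOp A) (x : X) :
    Convex ℝ (A x) := by
  rw [maxMono_char hA x]
  refine convex_iInter fun y => convex_iInter fun q => convex_iInter fun _ => ?_
  intro p hp p' hp' a b ha hb hab
  simp only [Set.mem_setOf_eq] at hp hp' ⊢
  have h1 : ((a • p + b • p') - q) (x - y)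
      = a * ((p - q) (x - y)) + b * ((p' - q) (x - y)) := by
    simp only [ContinuousLinearMap.sub_apply, ContinuousLinearMap.add_apply,
      ContinuousLinearMap.smul_apply, smul_eq_mul]
    have : a * q (x - y) + b * q (x - y) = q (x - y) := by rw [← add_mul, hab, one_mul]
    linarith [this]
  rw [h1]
  exact add_nonneg (mul_nonneg ha hp) (mul_nonneg hb hp')

end MM

/-- In a reflexive Banach space, for a maximal monotone operator `A` and every
`x ∈ D(A)`, the norm-boundary of `Ax` equals the norm-closure of the union of all faces of `Ax`
in nonzero directions. -/
theorem frontier_eq_closure_union_faces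
    [CompleteSpace X] (hrefl : IsReflexiveSp X)
    (A : X → Set (StrongDual ℝ X)) (hA : IsMaxMonotoneOp A) :
    ∀ x ∈ opDom A,
      frontier (A x) = closure (⋃ v ∈ {v : X | v ≠ 0}, face A x v) := by
  intro x _
  have hclosed : IsClosed (A x) := maxMono_isClosed hA x
  have hconv : Convex ℝ (A x) := maxMono_convex hA x
  apply Set.Subset.antisymm
  · intro p hp
    rw [hclosed.frontier_eq] at hp
    obtain ⟨hpC, hpint⟩ := hp
    rw [Metric.mem_closure_iff]
    intro r hr
    obtain ⟨c, hcC, h, hh0, hmax, hdist⟩ := bishop_phelps_aux hclosed hconv hpC hpint hr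
    obtain ⟨v, hv⟩ := hrefl h
    have hvne : v ≠ 0 := by
      rintro rfl
      apply hh0
      rw [← hv, map_zero]
    refine ⟨c, ?_, ?_⟩
    · have hcv : ∀ s ∈ A x, s v ≤ c v := by
        intro s hs
        have h1 := hmax s hs
        rw [← hv] at h1
        simpa only [NormedSpace.dual_def] using h1
      have hface : c ∈ face A x v := by
        refine ⟨hcC, ?_⟩
        unfold suppFn
        refine le_antisymm (le_iSup₂ (f := fun s (_ : s ∈ A x) => ((s v : ℝ) : EReal)) c hcC) ?_
        exact iSup₂_le fun s hs => EReal.coe_le_coe_iff.2 (hcv s hs)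
      exact Set.mem_biUnion hvne hface
    · rw [dist_eq_norm, norm_sub_rev]
      exact hdist
  · refine closure_minimal ?_ isClosed_frontier
    intro p hp
    simp only [Set.mem_iUnion] at hp
    obtain ⟨v, hv, hpC, hpeq⟩ := hp
    rw [hclosed.frontier_eq]
    refine ⟨hpC, fun hint => ?_⟩
    rw [mem_interior_iff_mem_nhds, Metric.mem_nhds_iff] at hint
    obtain ⟨r, hr, hball⟩ := hint
    obtain ⟨q, hq1, hq2⟩ := exists_dual_vector ℝ v (norm_ne_zero_iff.2 hv)
    have hmem : p + (r / 2) • q ∈ A x := by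
      apply hball
      rw [Metric.mem_ball, dist_eq_norm]
      have h1 : p + (r / 2) • q - p = (r / 2) • q := by abel
      rw [h1, norm_smul (r / 2) q, Real.norm_of_nonneg (by positivity : (0:ℝ) ≤ r / 2),
        hq1, mul_one]
      linarith
    have hle : (((p + (r / 2) • q) v : ℝ) : EReal) ≤ suppFn (A x) v := by
      unfold suppFn
      exact le_iSup₂ (f := fun s (_ : s ∈ A x) => ((s v : ℝ) : EReal)) _ hmem
    rw [← hpeq] at hle
    have h2 : (p + (r / 2) • q) v ≤ p v := EReal.coe_le_coe_iff.1 hle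
    have hqv : q v = ‖v‖ := by exact_mod_cast hq2
    have h3 : (p + (r / 2) • q) v = p v + (r / 2) * ‖v‖ := by
      simp [ContinuousLinearMap.add_apply, ContinuousLinearMap.smul_apply, smul_eq_mul, hqv]
    have h4 : 0 < ‖v‖ := norm_pos_iff.2 hv
    nlinarith
end

section
/- Let X be a uniformly convex real Banach space whose topological dual X* is also uniformly convex, and let A : X ⇒ X* be a maximal monotone operator. For every x ∈ D(A), every v ∈ T(x; cl D(A)), and every pair of sequences t_n ↓ 0, w_n → v with x + t_n w_n ∈ D(A) for all n, one has σ_{Ax}(w_n) ≤ ⟨A°(x + t_n w_n), w_n⟩ for every n, and consequently σ_{Ax}(v) ≤ liminf_n ⟨A°(x + t_n w_n), w_n⟩. -/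
open Filter Topology Pointwise

variable {X : Type*} [NormedAddCommGroup X] [NormedSpace ℝ X]

/-- In a uniformly convex Banach space with uniformly convex dual, for `x ∈ D(A)`,
`v ∈ T(x; cl D(A))` and sequences `t_n ↓ 0`, `w_n → v` with `x + t_n w_n ∈ D(A)`, one has
`σ_{Ax}(w_n) ≤ ⟨A°(x+t_n w_n), w_n⟩` for all `n` and hence
`σ_{Ax}(v) ≤ liminf_n ⟨A°(x+t_n w_n), w_n⟩`. -/
theorem suppFn_le_liminf_along_sequences
    [CompleteSpace X] [UniformConvexSpace X] [UniformConvexSpace (StrongDual ℝ X)]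
    (A : X → Set (StrongDual ℝ X)) (hA : IsMaxMonotoneOp A)
    (A0 : X → StrongDual ℝ X) (hA0 : IsMinNormSelection A A0) :
    ∀ x ∈ opDom A, ∀ v ∈ tanCone (closure (opDom A)) x,
      ∀ (t : ℕ → ℝ) (w : ℕ → X), (∀ n, 0 < t n) → Tendsto t atTop (𝓝 0) →
        Tendsto w atTop (𝓝 v) → (∀ n, x + t n • w n ∈ opDom A) →
        (∀ n, suppFn (A x) (w n) ≤ (((A0 (x + t n • w n)) (w n) : ℝ) : EReal)) ∧
        suppFn (A x) v ≤
          liminf (fun n => (((A0 (x + t n • w n)) (w n) : ℝ) : EReal)) atTop := by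
  intro x hx v hv t w ht ht0 hw hD
  have key : ∀ n, ∀ s ∈ A x, s (w n) ≤ (A0 (x + t n • w n)) (w n) := by
    intro n s hs
    have hq := (hA0 _ (hD n)).1
    have hmono := hA.1 hq hs
    have heq : (A0 (x + t n • w n) - s) (x + t n • w n - x)
        = t n * ((A0 (x + t n • w n)) (w n) - s (w n)) := by
      have : x + t n • w n - x = t n • w n := by abel
      rw [this]
      simp [map_smul, map_sub, mul_sub]
    rw [heq] at hmono
    nlinarith [ht n]
  constructor
  · intro n
    refine iSup₂_le fun s hs => ?_
    exact_mod_cast key n s hs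
  · refine iSup₂_le fun s hs => ?_
    have hlim : Tendsto (fun n => ((s (w n) : ℝ) : EReal)) atTop (𝓝 ((s v : ℝ) : EReal)) :=
      (continuous_coe_real_ereal.tendsto _).comp ((s.continuous.tendsto v).comp hw)
    rw [← hlim.liminf_eq]
    refine liminf_le_liminf (Filter.Eventually.of_forall fun n => ?_)
    exact_mod_cast key n s hs
end

section
/- Let X be a reflexive real Banach space and A : X ⇒ X* a maximal monotone operator whose domain has nonempty interior. Let x ∈ D(A) and let K be a nonempty norm-closed convex subset of Ax. Then the set K + N(x; cl D(A)) is norm-closed in X*. -/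
open Filter Topology Pointwise

variable {X : Type*} [NormedAddCommGroup X] [NormedSpace ℝ X]

/-! ### Auxiliary lemmas for Statement 14 -/

section Aux

open Metric Set NormedSpace

/-- Evaluation of a norm-convergent sequence of functionals converges. -/
private lemma evalTendsto {s : ℕ → StrongDual ℝ X} {q : StrongDual ℝ X}
    (hs : Tendsto s atTop (𝓝 q)) (v : X) :
    Tendsto (fun j => s j v) atTop (𝓝 (q v)) :=
  ((ContinuousLinearMap.apply ℝ ℝ v).continuous.tendsto q).comp hs

/-- A cluster point of a map eventually in a closed set lies in that set. -/
private lemma clusterPt_mem {α ι : Type*} [TopologicalSpace α] {F : Filter ι} [F.NeBot]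
    {u : ι → α} {x : α} (h : MapClusterPt x F u) {C : Set α} (hC : IsClosed C)
    (hev : ∀ᶠ i in F, u i ∈ C) : x ∈ C := by
  have hle : Filter.map u F ≤ 𝓟 C := Filter.le_principal_iff.mpr (Filter.mem_map.mpr hev)
  have hcp : ClusterPt x (𝓟 C) := ClusterPt.mono h hle
  rw [← hC.closure_eq]
  exact mem_closure_iff_clusterPt.mpr hcp

/-- A functional whose values on the closed unit ball are bounded above by `c` has norm `≤ c`. -/
private lemma dual_norm_le {f : StrongDual ℝ X} {c : ℝ}
    (h : ∀ b : X, ‖b‖ ≤ 1 → f b ≤ c) : ‖f‖ ≤ c := by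
  have hc : 0 ≤ c := by simpa using h 0 (by simp)
  refine f.opNorm_le_bound hc fun b => ?_
  rcases eq_or_ne b 0 with rfl | hb
  · simp
  · have hnb : 0 < ‖b‖ := norm_pos_iff.mpr hb
    have hu : ‖(‖b‖⁻¹ • b)‖ ≤ 1 := by
      rw [norm_smul, norm_inv, norm_norm, inv_mul_cancel₀ hnb.ne']
    have h1 := h _ hu
    have h2 := h (-(‖b‖⁻¹ • b)) (by rwa [norm_neg])
    rw [map_smul, smul_eq_mul] at h1
    rw [map_neg, map_smul, smul_eq_mul] at h2
    have h1' : f b ≤ c * ‖b‖ := by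
      have := mul_le_mul_of_nonneg_left h1 hnb.le
      rwa [← mul_assoc, mul_inv_cancel₀ hnb.ne', one_mul, mul_comm] at this
    have h2' : -(f b) ≤ c * ‖b‖ := by
      have := mul_le_mul_of_nonneg_left h2 hnb.le
      rwa [mul_neg, ← mul_assoc, mul_inv_cancel₀ hnb.ne', one_mul, mul_comm] at this
    rw [Real.norm_eq_abs, abs_le]
    constructor <;> linarith

/-- A functional monotonically related to a maximal monotone operator belongs to its graph. -/
private lemma mem_of_monotone_rel {A : X → Set (StrongDual ℝ X)}
    (hA : IsMaxMonotoneOp A) {y : X} {p : StrongDual ℝ X}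
    (h : ∀ ⦃z : X⦄ ⦃z' : StrongDual ℝ X⦄, z' ∈ A z → 0 ≤ (p - z') (y - z)) :
    p ∈ A y := by
  classical
  set B : X → Set (StrongDual ℝ X) :=
    fun z => if z = y then insert p (A z) else A z with hBdef
  have hmem : ∀ (c : X) (c' : StrongDual ℝ X), c' ∈ B c → c' ∈ A c ∨ (c = y ∧ c' = p) := by
    intro c c' hc
    by_cases hcy : c = y
    · simp only [hBdef, if_pos hcy] at hc
      rcases hc with rfl | hc
      · exact Or.inr ⟨hcy, rfl⟩
      · exact Or.inl hc
    · simp only [hBdef, if_neg hcy] at hc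
      exact Or.inl hc
  have key : ∀ (a b : X) (a' b' : StrongDual ℝ X), a' ∈ A a → b = y → b' = p →
      0 ≤ (a' - b') (a - b) := by
    intro a b a' b' ha hb hb'
    subst hb; subst hb'
    have hrel := h ha
    simp only [ContinuousLinearMap.sub_apply, map_sub] at hrel ⊢
    linarith
  have hmono : IsMonotoneOp B := by
    intro a b a' b' ha hb
    rcases hmem a a' ha with ha1 | ⟨hay, hap⟩ <;> rcases hmem b b' hb with hb1 | ⟨hby, hbp⟩
    · exact hA.1 ha1 hb1
    · exact key a b a' b' ha1 hby hbp
    · have := key b a b' a' hb1 hay hap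
      simp only [ContinuousLinearMap.sub_apply, map_sub] at this ⊢
      linarith
    · subst hay; subst hap; subst hby; subst hbp; simp
  have hsub : ∀ z, A z ⊆ B z := by
    intro z g hg
    by_cases hzy : z = y
    · simp only [hBdef, if_pos hzy]
      exact Set.mem_insert_of_mem _ hg
    · simpa only [hBdef, if_neg hzy] using hg
  have hBA := hA.2 B hmono hsub
  have hpB : p ∈ B y := by simp [hBdef]
  rwa [hBA] at hpB

/-- Local boundedness via Baire category: there is a closed ball on which `A` admits a
uniformly bounded selection. -/
private lemma exists_ball_bound [CompleteSpace X] {A : X → Set (StrongDual ℝ X)}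
    (hA : IsMaxMonotoneOp A) {u₀ : X} {ρ : ℝ} (hρ : 0 < ρ)
    (hball : Metric.ball u₀ ρ ⊆ opDom A) :
    ∃ (y₀ : X) (r M : ℝ), 0 < r ∧ 0 ≤ M ∧
      ∀ y ∈ Metric.closedBall y₀ r, ∃ p ∈ A y, ‖p‖ ≤ M := by
  classical
  set C : ℕ → Set X := fun n =>
    {y | y ∈ Metric.closedBall u₀ (ρ / 2) ∧ ∃ p ∈ A y, ‖p‖ ≤ (n : ℝ)} with hCdef
  have hCclosed : ∀ n, IsClosed (C n) := by
    intro n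
    refine isClosed_of_closure_subset ?_
    intro y hy
    rcases mem_closure_iff_seq_limit.mp hy with ⟨w, hw, hwlim⟩
    choose pb hpb hpbn using fun j => (hw j).2
    have hwB : ∀ j, w j ∈ Metric.closedBall u₀ (ρ / 2) := fun j => (hw j).1
    have hyB : y ∈ Metric.closedBall u₀ (ρ / 2) :=
      Metric.isClosed_closedBall.mem_of_tendsto hwlim (Filter.Eventually.of_forall hwB)
    have hcomp := WeakDual.isCompact_closedBall (𝕜 := ℝ) (E := X) 0 (n : ℝ)
    have hmaple : Filter.map (fun j => StrongDual.toWeakDual (pb j)) atTop ≤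
        𝓟 (WeakDual.toStrongDual ⁻¹' Metric.closedBall 0 (n : ℝ)) := by
      rw [Filter.le_principal_iff, Filter.mem_map]
      refine Filter.Eventually.of_forall fun j => ?_
      show StrongDual.toWeakDual (pb j) ∈ _
      rw [Set.mem_preimage, mem_closedBall_zero_iff]
      exact hpbn j
    obtain ⟨P, hPball, hPcl⟩ := hcomp.exists_mapClusterPt hmaple
    set p₀ : StrongDual ℝ X := WeakDual.toStrongDual P with hp₀def
    have hp₀n : ‖p₀‖ ≤ (n : ℝ) := by
      rw [Set.mem_preimage, mem_closedBall_zero_iff] at hPball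
      exact hPball
    refine ⟨hyB, p₀, ?_, hp₀n⟩
    refine mem_of_monotone_rel hA ?_
    intro z z' hz'
    have hineq : ∀ ε > 0, z' (y - z) - ε ≤ p₀ (y - z) := by
      intro ε hε
      have hδ : 0 < ε / (2 * ((n : ℝ) + 1)) := by positivity
      set δ := ε / (2 * ((n : ℝ) + 1)) with hδdef
      have hnδ : (n : ℝ) * δ ≤ ε / 2 := by
        have hn0 : (0:ℝ) ≤ (n : ℝ) := n.cast_nonneg
        rw [hδdef, ← mul_div_assoc, div_le_div_iff₀ (by positivity) two_pos]
        nlinarith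
      have ev1 : ∀ᶠ j in atTop, ‖w j - y‖ ≤ δ := by
        have := hwlim.eventually_mem (Metric.closedBall_mem_nhds y hδ)
        filter_upwards [this] with j hj
        rw [Metric.mem_closedBall, dist_eq_norm] at hj
        exact hj
      have ht : Tendsto (fun j => z' (w j - z)) atTop (𝓝 (z' (y - z))) :=
        (z'.continuous.tendsto (y - z)).comp (hwlim.sub_const z)
      have ev2 : ∀ᶠ j in atTop, z' (y - z) - ε / 2 ≤ z' (w j - z) :=
        ht.eventually (eventually_ge_nhds (by linarith))
      have evC : ∀ᶠ j in atTop, StrongDual.toWeakDual (pb j) ∈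
          {g : WeakDual ℝ X | z' (y - z) - ε ≤ g (y - z)} := by
        filter_upwards [ev1, ev2] with j h1 h2
        have hmon := hA.1 (hpb j) hz'
        simp only [ContinuousLinearMap.sub_apply, map_sub] at hmon h2 ⊢
        have habs : ‖(pb j) (y - w j)‖ ≤ (n : ℝ) * δ := by
          refine le_trans ((pb j).le_opNorm _) ?_
          have h3 : ‖y - w j‖ ≤ δ := by rwa [norm_sub_rev]
          exact mul_le_mul (hpbn j) h3 (norm_nonneg _) n.cast_nonneg
        rw [Real.norm_eq_abs, abs_le] at habs
        simp only [map_sub] at habs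
        show z' y - z' z - ε ≤ (pb j) y - (pb j) z
        linarith [habs.1, habs.2]
      have hcl : IsClosed {g : WeakDual ℝ X | z' (y - z) - ε ≤ g (y - z)} :=
        isClosed_le continuous_const (WeakDual.eval_continuous (y - z))
      exact clusterPt_mem hPcl hcl evC
    have hfin : z' (y - z) ≤ p₀ (y - z) := le_of_forall_sub_le hineq
    simp only [ContinuousLinearMap.sub_apply]
    linarith
  -- Baire category argument
  have hUnion : (⋃ n, C n ∪ (Metric.ball u₀ (ρ / 2))ᶜ) = Set.univ := by
    ext v
    simp only [Set.mem_iUnion, Set.mem_union, Set.mem_univ, iff_true]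
    by_cases hv : v ∈ Metric.ball u₀ (ρ / 2)
    · have hvD : v ∈ opDom A := by
        refine hball ?_
        rw [Metric.mem_ball] at hv ⊢
        linarith
      obtain ⟨g, hg⟩ := hvD
      obtain ⟨n, hn⟩ := exists_nat_ge ‖g‖
      exact ⟨n, Or.inl ⟨Metric.ball_subset_closedBall hv, g, hg, hn⟩⟩
    · exact ⟨0, Or.inr hv⟩
  have hdense := dense_iUnion_interior_of_closed
    (fun n => (hCclosed n).union Metric.isOpen_ball.isClosed_compl) hUnion
  obtain ⟨y₁, hy₁, hy₁ball⟩ := hdense.exists_mem_open (U := Metric.ball u₀ (ρ / 2))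
    Metric.isOpen_ball ⟨u₀, Metric.mem_ball_self (by positivity)⟩
  rcases Set.mem_iUnion.mp hy₁ with ⟨n, hn⟩
  rcases Metric.isOpen_iff.mp isOpen_interior y₁ hn with ⟨r₁, hr₁, hball₁⟩
  rcases Metric.isOpen_iff.mp Metric.isOpen_ball y₁ hy₁ball with ⟨r₂, hr₂, hball₂⟩
  refine ⟨y₁, min r₁ r₂ / 2, n, by positivity, n.cast_nonneg, ?_⟩
  intro y hy
  rw [Metric.mem_closedBall] at hy
  have hy1 : y ∈ Metric.ball y₁ r₁ := by
    rw [Metric.mem_ball]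
    calc dist y y₁ ≤ min r₁ r₂ / 2 := hy
      _ < min r₁ r₂ := by linarith [lt_min hr₁ hr₂]
      _ ≤ r₁ := min_le_left _ _
  have hy2 : y ∈ Metric.ball y₁ r₂ := by
    rw [Metric.mem_ball]
    calc dist y y₁ ≤ min r₁ r₂ / 2 := hy
      _ < min r₁ r₂ := by linarith [lt_min hr₁ hr₂]
      _ ≤ r₂ := min_le_right _ _
  have hyU := interior_subset (hball₁ hy1)
  have hCn : y ∈ C n := by
    rcases hyU with hC | hcomp
    · exact hC
    · exact absurd (hball₂ hy2) hcomp
  exact hCn.2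

end Aux

/-- For a maximal monotone `A` with `int D(A) ≠ ∅` on a reflexive Banach space,
`x ∈ D(A)` and a nonempty closed convex `K ⊆ Ax`, the set `K + N(x; cl D(A))` is norm-closed. -/
theorem sum_with_normalCone_isClosed
    [CompleteSpace X] (hrefl : IsReflexiveSp X)
    (A : X → Set (StrongDual ℝ X)) (hA : IsMaxMonotoneOp A)
    (hint : (interior (opDom A)).Nonempty)
    (x : X) (hx : x ∈ opDom A) (K : Set (StrongDual ℝ X))
    (hKne : K.Nonempty) (hKcl : IsClosed K) (hKco : Convex ℝ K) (hKA : K ⊆ A x) :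
    IsClosed (K + normalCone (closure (opDom A)) x) := by
  classical
  obtain ⟨u₀, hu₀⟩ := hint
  rcases Metric.isOpen_iff.mp isOpen_interior u₀ hu₀ with ⟨ρ, hρ, hρball⟩
  have hball₀ : Metric.ball u₀ ρ ⊆ opDom A := fun v hv => interior_subset (hρball hv)
  obtain ⟨y₀, r, M, hr, hM, hsel⟩ := exists_ball_bound hA hρ hball₀
  have hmemD : ∀ y ∈ Metric.closedBall y₀ r, y ∈ opDom A := by
    intro y hy
    obtain ⟨py, hpy, -⟩ := hsel y hy
    exact ⟨py, hpy⟩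
  rw [← isSeqClosed_iff_isClosed]
  intro s q hmem hs
  choose k hkK p hpN hkp using fun j => Set.mem_add.mp (hmem j)
  -- bound on ‖s j‖
  obtain ⟨B0, hB0⟩ := hs.norm.bddAbove_range
  have hB0' : ∀ j, ‖s j‖ ≤ B0 := fun j => hB0 (Set.mem_range_self j)
  have hB0nn : 0 ≤ B0 := le_trans (norm_nonneg _) (hB0' 0)
  set c := ‖x - y₀‖ with hcdef
  -- elements of A x are bounded below against the ball
  have key1 : ∀ (f : StrongDual ℝ X), f ∈ A x → ∀ y ∈ Metric.closedBall y₀ r,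
      -(M * ‖x - y‖) ≤ f (x - y) := by
    intro f hf y hy
    obtain ⟨py, hpy, hpyM⟩ := hsel y hy
    have hmon := hA.1 hf hpy
    have habs : ‖py (x - y)‖ ≤ M * ‖x - y‖ :=
      le_trans (py.le_opNorm _) (mul_le_mul_of_nonneg_right hpyM (norm_nonneg _))
    rw [Real.norm_eq_abs, abs_le] at habs
    simp only [ContinuousLinearMap.sub_apply] at hmon
    linarith [habs.1]
  have hy₀cl : y₀ ∈ closure (opDom A) :=
    subset_closure (hmemD y₀ (Metric.mem_closedBall_self hr.le))
  have key2 : ∀ j, 0 ≤ p j (x - y₀) := by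
    intro j
    have h1 := (hpN j).2 y₀ hy₀cl
    rw [← neg_sub x y₀, map_neg] at h1
    linarith
  have hsplit : ∀ j (v : X), k j v + p j v = s j v := by
    intro j v
    rw [← ContinuousLinearMap.add_apply, hkp j]
  have hsxy : ∀ j, s j (x - y₀) ≤ B0 * c := by
    intro j
    calc s j (x - y₀) ≤ ‖s j (x - y₀)‖ := le_abs_self _
      _ ≤ ‖s j‖ * ‖x - y₀‖ := (s j).le_opNorm _
      _ ≤ B0 * c := mul_le_mul_of_nonneg_right (hB0' j) (norm_nonneg _)
  have hkxy : ∀ j, k j (x - y₀) ≤ B0 * c := by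
    intro j
    have := hsplit j (x - y₀)
    linarith [key2 j, hsxy j]
  -- bound on ‖k j‖
  have hkbound : ∀ j, ‖k j‖ ≤ (B0 * c + M * (c + r)) / r := by
    intro j
    refine dual_norm_le fun b hb => ?_
    have hyb : y₀ + r • b ∈ Metric.closedBall y₀ r := by
      rw [Metric.mem_closedBall, dist_eq_norm]
      simp only [add_sub_cancel_left, norm_smul, Real.norm_eq_abs, abs_of_pos hr]
      calc r * ‖b‖ ≤ r * 1 := mul_le_mul_of_nonneg_left hb hr.le
        _ = r := mul_one r
    have h1 := key1 (k j) (hKA (hkK j)) _ hyb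
    have hnxy : ‖x - (y₀ + r • b)‖ ≤ c + r := by
      calc ‖x - (y₀ + r • b)‖ = ‖(x - y₀) - r • b‖ := by rw [sub_add_eq_sub_sub]
        _ ≤ ‖x - y₀‖ + ‖r • b‖ := norm_sub_le _ _
        _ ≤ c + r := by
            refine add_le_add le_rfl ?_
            rw [norm_smul, Real.norm_eq_abs, abs_of_pos hr]
            calc r * ‖b‖ ≤ r * 1 := mul_le_mul_of_nonneg_left hb hr.le
              _ = r := mul_one r
    have h2 : k j (x - (y₀ + r • b)) = k j (x - y₀) - r * k j b := by
      rw [show x - (y₀ + r • b) = (x - y₀) - r • b by abel, map_sub, map_smul, smul_eq_mul]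
    rw [le_div_iff₀ hr]
    have h3 : -(M * (c + r)) ≤ -(M * ‖x - (y₀ + r • b)‖) :=
      neg_le_neg (mul_le_mul_of_nonneg_left hnxy hM)
    have h4 := hkxy j
    rw [h2] at h1
    nlinarith [mul_le_mul_of_nonneg_left hnxy hM]
  -- bound on ‖p j‖
  have hpbound : ∀ j, ‖p j‖ ≤ (B0 * c + M * c) / r := by
    intro j
    refine dual_norm_le fun b hb => ?_
    have hyb : y₀ + r • b ∈ Metric.closedBall y₀ r := by
      rw [Metric.mem_closedBall, dist_eq_norm]
      simp only [add_sub_cancel_left, norm_smul, Real.norm_eq_abs, abs_of_pos hr]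
      calc r * ‖b‖ ≤ r * 1 := mul_le_mul_of_nonneg_left hb hr.le
        _ = r := mul_one r
    have h1 := (hpN j).2 _ (subset_closure (hmemD _ hyb))
    have h2 : p j (y₀ + r • b - x) = r * p j b - p j (x - y₀) := by
      rw [show y₀ + r • b - x = r • b - (x - y₀) by abel, map_sub, map_smul, smul_eq_mul]
    rw [h2] at h1
    -- k j (x - y₀) ≥ -(M * c)
    have h3 := key1 (k j) (hKA (hkK j)) y₀ (Metric.mem_closedBall_self hr.le)
    rw [← hcdef] at h3
    have h4 := hsplit j (x - y₀)
    have h5 : p j (x - y₀) ≤ B0 * c + M * c := by linarith [hsxy j]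
    rw [le_div_iff₀ hr]
    linarith
  -- weak-* cluster point of (k j)
  set RK := (B0 * c + M * (c + r)) / r with hRKdef
  have hcomp := WeakDual.isCompact_closedBall (𝕜 := ℝ) (E := X) 0 RK
  have hmaple : Filter.map (fun j => StrongDual.toWeakDual (k j)) atTop ≤
      𝓟 (WeakDual.toStrongDual ⁻¹' Metric.closedBall 0 RK) := by
    rw [Filter.le_principal_iff, Filter.mem_map]
    refine Filter.Eventually.of_forall fun j => ?_
    show StrongDual.toWeakDual (k j) ∈ _
    rw [Set.mem_preimage, mem_closedBall_zero_iff]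
    exact hkbound j
  obtain ⟨K₀, hK₀ball, hK₀cl⟩ := hcomp.exists_mapClusterPt hmaple
  set k₀ : StrongDual ℝ X := WeakDual.toStrongDual K₀ with hk₀def
  -- k₀ ∈ K by Hahn-Banach separation and reflexivity
  have hk₀K : k₀ ∈ K := by
    by_contra hk₀
    obtain ⟨f, u, hfK, hfk₀⟩ := geometric_hahn_banach_closed_point hKco hKcl hk₀
    obtain ⟨z, hz⟩ := hrefl f
    have hzf : ∀ g : StrongDual ℝ X, f g = g z := by
      intro g
      rw [← hz]
      rfl
    have hcl : IsClosed {g : WeakDual ℝ X | g z ≤ u} :=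
      isClosed_le (WeakDual.eval_continuous z) continuous_const
    have hev : ∀ᶠ j in atTop, StrongDual.toWeakDual (k j) ∈
        {g : WeakDual ℝ X | g z ≤ u} := by
      refine Filter.Eventually.of_forall fun j => ?_
      show k j z ≤ u
      rw [← hzf (k j)]
      exact (hfK _ (hkK j)).le
    have hK₀z : K₀ z ≤ u := clusterPt_mem hK₀cl hcl hev
    rw [hzf k₀] at hfk₀
    exact absurd hK₀z (not_le.mpr hfk₀)
  -- q - k₀ belongs to the normal cone
  have hp₀N : q - k₀ ∈ normalCone (closure (opDom A)) x := by
    refine ⟨subset_closure hx, ?_⟩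
    intro y hy
    have hq : ∀ ε > 0, q (y - x) - ε ≤ k₀ (y - x) := by
      intro ε hε
      have ht : Tendsto (fun j => s j (y - x)) atTop (𝓝 (q (y - x))) := evalTendsto hs _
      have hev : ∀ᶠ j in atTop, StrongDual.toWeakDual (k j) ∈
          {g : WeakDual ℝ X | q (y - x) - ε ≤ g (y - x)} := by
        filter_upwards [ht.eventually (eventually_ge_nhds (show q (y - x) - ε < q (y - x) by
          linarith))] with j hj
        have h2 := (hpN j).2 y hy
        have h3 := hsplit j (y - x)
        show q (y - x) - ε ≤ k j (y - x)
        linarith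
      have hcl : IsClosed {g : WeakDual ℝ X | q (y - x) - ε ≤ g (y - x)} :=
        isClosed_le continuous_const (WeakDual.eval_continuous (y - x))
      exact clusterPt_mem hK₀cl hcl hev
    have h4 : q (y - x) ≤ k₀ (y - x) := le_of_forall_sub_le hq
    simp only [ContinuousLinearMap.sub_apply]
    linarith
  exact Set.mem_add.mpr ⟨k₀, hk₀K, q - k₀, hp₀N, by abel⟩
end

section
/- Let X be a reflexive real Banach space and let A, B : X ⇒ X* be maximal monotone operators such that int D(A) = int D(B) ≠ ∅. If there exists a dense subset D of D(A) such that Ax ∩ Bx ≠ ∅ for every x ∈ D, then A = B (that is, Ax = Bx for every x ∈ X). -/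
open Filter Topology Pointwise

variable {X : Type*} [NormedAddCommGroup X] [NormedSpace ℝ X]

section UniqueDeterminationAux

variable {A : X → Set (StrongDual ℝ X)}

lemma ud_pair_flip (f g : StrongDual ℝ X) (u w : X) :
    (f - g) (u - w) = (g - f) (w - u) := by
  simp only [ContinuousLinearMap.sub_apply, map_sub]; ring

/-- A point monotonically related to the graph of a maximal monotone operator belongs to it. -/
lemma ud_mem_of_rel (hA : IsMaxMonotoneOp A) {x : X} {p : StrongDual ℝ X}
    (h : ∀ y (q : StrongDual ℝ X), q ∈ A y → 0 ≤ (p - q) (x - y)) : p ∈ A x := by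
  classical
  set A' : X → Set (StrongDual ℝ X) :=
    fun z => A z ∪ {q | z = x ∧ q = p} with hA'def
  have hmono : IsMonotoneOp A' := by
    rintro z w q1 q2 (h1 | ⟨rfl, rfl⟩) (h2 | ⟨rfl, rfl⟩)
    · exact hA.1 h1 h2
    · rw [ud_pair_flip]; exact h z q1 h1
    · exact h w q2 h2
    · simp
  have hsub : ∀ z, A z ⊆ A' z := fun z => Set.subset_union_left
  have := hA.2 A' hmono hsub
  rw [← this]
  exact Or.inr ⟨rfl, rfl⟩

lemma ud_single_le (hmono : IsMonotoneOp A) {y z : X} {q a : StrongDual ℝ X}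
    (hq : q ∈ A y) (ha : a ∈ A z) : q (z - y) ≤ a (z - y) := by
  have h := hmono hq ha
  simp only [ContinuousLinearMap.sub_apply, map_sub] at h ⊢
  linarith


set_option maxHeartbeats 1000000 in
/-- Local boundedness of a monotone operator at interior points of its domain. -/
lemma ud_loc_bdd [CompleteSpace X] (hmono : IsMonotoneOp A) {v : X}
    (hv : v ∈ interior (opDom A)) :
    ∃ r > 0, ∃ M ≥ (0:ℝ), Metric.ball v r ⊆ opDom A ∧
      ∀ ⦃w⦄, w ∈ Metric.ball v r → ∀ ⦃q⦄, q ∈ A w → ‖q‖ ≤ M := by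
  classical
  obtain ⟨ρ, hρ, hball⟩ : ∃ ρ > 0, Metric.ball v ρ ⊆ opDom A :=
    Metric.mem_nhds_iff.1 (mem_interior_iff_mem_nhds.1 hv)
  set K : Set X := Metric.closedBall v (ρ/2) with hKdef
  have hKdom : K ⊆ opDom A := fun z hz =>
    hball (by simpa using lt_of_le_of_lt (Metric.mem_closedBall.1 hz) (by linarith))
  set Ks : Set X := Metric.closedBall v (ρ/8) with hKsdef
  have hKsK : Ks ⊆ K := Metric.closedBall_subset_closedBall (by linarith)
  have hKsdom : Ks ⊆ opDom A := fun z hz => hKdom (hKsK hz)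
  have hKdiam : ∀ z, z ∈ Metric.closedBall v (ρ/2) → ∀ y ∈ K, ‖z - y‖ ≤ ρ := by
    intro z hz y hy
    rw [← dist_eq_norm]
    calc dist z y ≤ dist z v + dist v y := dist_triangle _ _ _
    _ ≤ ρ/2 + ρ/2 := add_le_add (Metric.mem_closedBall.1 hz)
        (by rw [dist_comm]; exact Metric.mem_closedBall.1 hy)
    _ = ρ := by ring
  set E : ℕ → Set X := fun n => {z | ∀ y ∈ K, ∀ q ∈ A y, q (z - y) ≤ (n:ℝ)} with hEdef
  have hEc : ∀ n, IsClosed (E n) := by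
    intro n
    have : E n = ⋂ y ∈ K, ⋂ q ∈ A y, {z | q (z - y) ≤ (n:ℝ)} := by
      ext z; simp [hEdef]
    rw [this]
    refine isClosed_biInter fun y _ => isClosed_biInter fun q _ => ?_
    exact isClosed_le (q.continuous.comp (continuous_id.sub continuous_const)) continuous_const
  haveI : Nonempty Ks := ⟨⟨v, Metric.mem_closedBall_self (by positivity)⟩⟩
  haveI : CompleteSpace Ks := Metric.isClosed_closedBall.completeSpace_coe
  have hcov : ⋃ n, (Subtype.val ⁻¹' E n : Set Ks) = Set.univ := by
    rw [Set.eq_univ_iff_forall]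
    rintro ⟨z, hz⟩
    obtain ⟨a, ha⟩ := hKsdom hz
    refine Set.mem_iUnion.2 ⟨⌈‖a‖ * ρ⌉₊, ?_⟩
    intro y hy q hq
    have hzK : z ∈ Metric.closedBall v (ρ/2) := hKsK hz
    calc q (z - y) ≤ a (z - y) := ud_single_le hmono hq ha
    _ ≤ ‖a‖ * ρ := by
        calc a (z - y) ≤ ‖a (z - y)‖ := le_abs_self _
        _ ≤ ‖a‖ * ‖z - y‖ := a.le_opNorm _
        _ ≤ ‖a‖ * ρ := by
            have := hKdiam z hzK y hy
            nlinarith [norm_nonneg a]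
    _ ≤ (⌈‖a‖ * ρ⌉₊ : ℝ) := Nat.le_ceil _
  obtain ⟨n0, z0s, hz0i⟩ := nonempty_interior_of_iUnion_of_closed
    (fun n => (hEc n).preimage continuous_subtype_val) hcov
  obtain ⟨ε, hε, hballK⟩ : ∃ ε > 0, Metric.ball z0s ε ⊆ (Subtype.val ⁻¹' E n0 : Set Ks) :=
    Metric.mem_nhds_iff.1 (mem_interior_iff_mem_nhds.1 hz0i)
  set z0 : X := z0s.1 with hz0def
  have hz0K : z0 ∈ Ks := z0s.2
  have hkey : ∀ z ∈ Ks, dist z z0 < ε → z ∈ E n0 := by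
    intro z hz hd
    exact hballK (show (⟨z, hz⟩ : Ks) ∈ Metric.ball z0s ε from by
      simpa [Metric.mem_ball, Subtype.dist_eq] using hd)
  set θ : ℝ := min (ε/ρ) (1/2) with hθdef
  have hθpos : 0 < θ := lt_min (by positivity) (by norm_num)
  have hθle : θ ≤ 1/2 := min_le_right _ _
  have hθρ : θ * ρ ≤ ε := by
    calc θ * ρ ≤ (ε/ρ) * ρ := by nlinarith [min_le_left (ε/ρ) (1/2:ℝ)]
    _ = ε := by field_simp
  set z1 : X := z0 + θ • (v - z0) with hz1def
  have hz0v : ‖z0 - v‖ ≤ ρ/8 := by rw [← dist_eq_norm]; exact Metric.mem_closedBall.1 hz0K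
  set ε1 : ℝ := θ * ρ / 16 with hε1def
  have hε1pos : 0 < ε1 := by positivity
  have hε1ρ : ε1 ≤ ρ/32 := by nlinarith
  have hz1v : ‖z1 - v‖ ≤ (1 - θ) * (ρ/8) := by
    have h1 : z1 - v = (1 - θ) • (z0 - v) := by rw [hz1def]; module
    rw [h1, norm_smul, Real.norm_eq_abs, abs_of_nonneg (by linarith)]
    nlinarith
  have hshift : ∀ u : X, ‖u‖ < ε1 → z1 + u ∈ E n0 := by
    intro u hu
    have hmem : z1 + u ∈ Ks := by
      rw [hKsdef, Metric.mem_closedBall, dist_eq_norm]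
      calc ‖z1 + u - v‖ ≤ ‖z1 - v‖ + ‖u‖ := by
            have : z1 + u - v = (z1 - v) + u := by abel
            rw [this]; exact norm_add_le _ _
      _ ≤ ρ/8 := by nlinarith
    have hd : dist (z1 + u) z0 < ε := by
      rw [dist_eq_norm]
      have h1 : z1 + u - z0 = θ • (v - z0) + u := by rw [hz1def]; module
      have h2 : ‖v - z0‖ = ‖z0 - v‖ := norm_sub_rev _ _
      calc ‖z1 + u - z0‖ ≤ ‖θ • (v - z0)‖ + ‖u‖ := by rw [h1]; exact norm_add_le _ _
      _ = θ * ‖z0 - v‖ + ‖u‖ := by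
          rw [norm_smul, Real.norm_eq_abs, abs_of_nonneg hθpos.le, h2]
      _ < ε := by nlinarith
    exact hkey _ hmem hd
  -- the reflected anchor point
  set zs : X := v + (v - z1) with hzsdef
  have hzsK : zs ∈ K := by
    rw [hKdef, Metric.mem_closedBall, dist_eq_norm]
    have h1 : zs - v = -(z1 - v) := by rw [hzsdef]; module
    rw [h1, norm_neg]
    nlinarith
  obtain ⟨astar, hastar⟩ := hKdom hzsK
  set N : ℝ := ((n0 : ℝ) + ‖astar‖ * ρ)/2 with hNdef
  have hNnonneg : 0 ≤ N := by positivity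
  -- convexity propagation: bound near v
  have hmid : ∀ ut : X, ‖ut‖ < ε1 → ∀ y ∈ K, ∀ q ∈ A y, q (v + (2⁻¹:ℝ) • ut - y) ≤ N := by
    intro ut hut y hy q hq
    have hdec : v + (2⁻¹:ℝ) • ut - y
        = (2⁻¹:ℝ) • (z1 + ut - y) + (2⁻¹:ℝ) • (zs - y) := by
      rw [hzsdef]; module
    have h1 : q (z1 + ut - y) ≤ (n0 : ℝ) := hshift ut hut y hy q hq
    have h2 : q (zs - y) ≤ astar (zs - y) := ud_single_le hmono hq hastar
    have h3 : astar (zs - y) ≤ ‖astar‖ * ρ := by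
      have hzsK2 : zs ∈ Metric.closedBall v (ρ/2) := hzsK
      calc astar (zs - y) ≤ ‖astar (zs - y)‖ := le_abs_self _
      _ ≤ ‖astar‖ * ‖zs - y‖ := astar.le_opNorm _
      _ ≤ ‖astar‖ * ρ := by
          have := hKdiam zs hzsK2 y hy
          nlinarith [norm_nonneg astar]
    calc q (v + (2⁻¹:ℝ) • ut - y)
        = (2⁻¹:ℝ) * q (z1 + ut - y) + (2⁻¹:ℝ) * q (zs - y) := by
          rw [hdec, map_add, map_smul, map_smul]; rfl
    _ ≤ N := by rw [hNdef]; linarith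
  set r : ℝ := ε1/4 with hrdef
  have hrpos : 0 < r := by positivity
  have hrρ : r < ρ/2 := by nlinarith
  refine ⟨r, hrpos, 2 * N / r, by positivity, fun w hw => hball (by
      have := Metric.mem_ball.1 hw
      exact Metric.mem_ball.2 (by linarith [hε1ρ])), ?_⟩
  intro w hw q hq
  have hwK : w ∈ K := by
    rw [hKdef, Metric.mem_closedBall]
    have := Metric.mem_ball.1 hw
    linarith
  have hqbd : ∀ u : X, ‖u‖ < r → q u ≤ N := by
    intro u hu
    set ut : X := (2:ℝ) • (w + u - v) with hutdef
    have hutn : ‖ut‖ < ε1 := by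
      rw [hutdef, norm_smul, Real.norm_eq_abs]
      have h1 : ‖w + u - v‖ ≤ ‖w - v‖ + ‖u‖ := by
        have : w + u - v = (w - v) + u := by abel
        rw [this]; exact norm_add_le _ _
      have h2 : ‖w - v‖ < r := by rw [← dist_eq_norm]; exact Metric.mem_ball.1 hw
      rw [abs_of_nonneg (by norm_num : (0:ℝ) ≤ 2)]
      have : r + r ≤ ε1/2 := by rw [hrdef]; ring_nf; linarith
      nlinarith
    have heq : v + (2⁻¹:ℝ) • ut = w + u := by rw [hutdef]; module
    have := hmid ut hutn w hwK q hq
    rw [heq] at this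
    have : q (w + u - w) ≤ N := this
    simpa using this
  refine q.opNorm_le_bound (by positivity) fun u => ?_
  rcases eq_or_ne u 0 with rfl | hu0
  · simp
  · have hnu : 0 < ‖u‖ := norm_pos_iff.2 hu0
    set u' : X := (r/2 * ‖u‖⁻¹) • u with hu'def
    have hu'norm : ‖u'‖ < r := by
      rw [hu'def, norm_smul, Real.norm_eq_abs, abs_of_nonneg (by positivity)]
      rw [mul_assoc, inv_mul_cancel₀ hnu.ne', mul_one]
      linarith
    have hrel : q u' = (r/2 * ‖u‖⁻¹) * q u := by
      rw [hu'def, map_smul]; rfl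
    have h1 : q u' ≤ N := hqbd u' hu'norm
    have h2 : q (-u') ≤ N := by
      have : ‖-u'‖ < r := by rwa [norm_neg]
      exact hqbd _ this
    rw [map_neg] at h2
    have habs : |q u'| ≤ N := abs_le.2 ⟨by linarith, h1⟩
    rw [hrel, abs_mul, abs_of_nonneg (by positivity : (0:ℝ) ≤ r/2 * ‖u‖⁻¹)] at habs
    have hfin : |q u| ≤ 2 * N / r * ‖u‖ := by
      rw [div_mul_eq_mul_div, le_div_iff₀ (by positivity : (0:ℝ) < r)]
      calc |q u| * r = (r/2 * ‖u‖⁻¹ * |q u|) * (2 * ‖u‖) := by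
            field_simp
      _ ≤ N * (2 * ‖u‖) := by nlinarith [abs_nonneg (q u), hnu]
      _ = 2 * N * ‖u‖ := by ring
    exact hfin

/-- Hahn–Banach: a finite system of linear inequalities with the norm-consistency
criterion admits a solution of norm at most `R`. -/
lemma ud_exists_dual_of_criterion {ι : Type*} (s : Finset ι) (u : ι → X) (c : ι → ℝ)
    {R : ℝ} (hR : 0 ≤ R)
    (h : ∀ lam : ι → ℝ, (∀ i ∈ s, 0 ≤ lam i) →
      ∑ i ∈ s, lam i * c i ≤ R * ‖∑ i ∈ s, lam i • u i‖) :
    ∃ p : StrongDual ℝ X, ‖p‖ ≤ R ∧ ∀ i ∈ s, c i ≤ p (u i) := by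
  classical
  set T : X → Set ℝ := fun w => {t | ∃ lam : ι → ℝ, (∀ i ∈ s, 0 ≤ lam i) ∧
    t = R * ‖w + ∑ i ∈ s, lam i • u i‖ - ∑ i ∈ s, lam i * c i} with hTdef
  have hTne : ∀ w, (T w).Nonempty := fun w => ⟨R * ‖w‖, 0, by simp, by simp⟩
  have hTlb : ∀ w, ∀ t ∈ T w, -(R * ‖w‖) ≤ t := by
    rintro w t ⟨lam, hlam, rfl⟩
    have h1 := h lam hlam
    have h2 : ‖∑ i ∈ s, lam i • u i‖ - ‖w‖ ≤ ‖w + ∑ i ∈ s, lam i • u i‖ := by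
      have h3 := norm_sub_le (w + ∑ i ∈ s, lam i • u i) w
      have h4 : w + (∑ i ∈ s, lam i • u i) - w = ∑ i ∈ s, lam i • u i := by abel
      rw [h4] at h3
      linarith
    nlinarith [norm_nonneg w, norm_nonneg (∑ i ∈ s, lam i • u i)]
  have hTbdd : ∀ w, BddBelow (T w) := fun w => ⟨-(R*‖w‖), fun t ht => hTlb w t ht⟩
  set N : X → ℝ := fun w => sInf (T w) with hNdef
  have hNle : ∀ w, ∀ t ∈ T w, N w ≤ t := fun w t ht => csInf_le (hTbdd w) ht
  have hNge : ∀ (w : X) (b : ℝ), (∀ t ∈ T w, b ≤ t) → b ≤ N w := fun w b hb => le_csInf (hTne w) hb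
  have hNnorm : ∀ w, N w ≤ R * ‖w‖ := fun w => hNle w _ ⟨0, by simp, by simp⟩
  have hNhom : ∀ a : ℝ, 0 < a → ∀ w, N (a • w) = a * N w := by
    have key : ∀ a : ℝ, 0 < a → ∀ w, N (a • w) ≤ a * N w := by
      intro a ha w
      have h1 : ∀ t ∈ T w, N (a • w) ≤ a * t := by
        rintro t ⟨lam, hlam, rfl⟩
        refine hNle _ _ ⟨a • lam, fun i hi => mul_nonneg ha.le (hlam i hi), ?_⟩
        have h2 : a • w + ∑ i ∈ s, (a • lam) i • u i = a • (w + ∑ i ∈ s, lam i • u i) := by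
          rw [smul_add, Finset.smul_sum]
          congr 1
          exact Finset.sum_congr rfl fun i _ => by simp [smul_smul]
        rw [h2, norm_smul, Real.norm_eq_abs, abs_of_pos ha]
        have h3 : ∑ i ∈ s, (a • lam) i * c i = a * ∑ i ∈ s, lam i * c i := by
          rw [Finset.mul_sum]
          exact Finset.sum_congr rfl fun i _ => by simp [Pi.smul_apply]; ring
        rw [h3]; ring
      have h2 : ∀ t ∈ T w, N (a • w) / a ≤ t := fun t ht => by
        rw [div_le_iff₀ ha]; have := h1 t ht; linarith [h1 t ht]
      have := hNge w _ h2
      calc N (a • w) = a * (N (a • w) / a) := by field_simp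
      _ ≤ a * N w := by nlinarith
    intro a ha w
    refine le_antisymm (key a ha w) ?_
    have h1 := key a⁻¹ (by positivity) (a • w)
    rw [smul_smul, inv_mul_cancel₀ ha.ne', one_smul] at h1
    calc a * N w ≤ a * (a⁻¹ * N (a • w)) := by nlinarith
    _ = N (a • w) := by field_simp
  have hNadd : ∀ w1 w2, N (w1 + w2) ≤ N w1 + N w2 := by
    intro w1 w2
    have key : ∀ t1 ∈ T w1, ∀ t2 ∈ T w2, N (w1 + w2) ≤ t1 + t2 := by
      rintro t1 ⟨l1, hl1, rfl⟩ t2 ⟨l2, hl2, rfl⟩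
      have hmem : R * ‖(w1 + w2) + ∑ i ∈ s, (l1 i + l2 i) • u i‖
          - ∑ i ∈ s, (l1 i + l2 i) * c i ∈ T (w1 + w2) := by
        refine ⟨fun i => l1 i + l2 i, fun i hi => add_nonneg (hl1 i hi) (hl2 i hi), rfl⟩
      refine le_trans (hNle _ _ hmem) ?_
      have hsplit : (w1 + w2) + ∑ i ∈ s, (l1 i + l2 i) • u i
          = (w1 + ∑ i ∈ s, l1 i • u i) + (w2 + ∑ i ∈ s, l2 i • u i) := by
        rw [show (∑ i ∈ s, (l1 i + l2 i) • u i)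
            = ∑ i ∈ s, l1 i • u i + ∑ i ∈ s, l2 i • u i by
          rw [← Finset.sum_add_distrib]
          exact Finset.sum_congr rfl fun i _ => add_smul _ _ _]
        abel
      have hnorm : ‖(w1 + w2) + ∑ i ∈ s, (l1 i + l2 i) • u i‖
          ≤ ‖w1 + ∑ i ∈ s, l1 i • u i‖ + ‖w2 + ∑ i ∈ s, l2 i • u i‖ := by
        rw [hsplit]; exact norm_add_le _ _
      have hcsum : ∑ i ∈ s, (l1 i + l2 i) * c i
          = ∑ i ∈ s, l1 i * c i + ∑ i ∈ s, l2 i * c i := by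
        rw [← Finset.sum_add_distrib]
        exact Finset.sum_congr rfl fun i _ => by ring
      rw [hcsum]
      nlinarith
    have h1 : ∀ t1 ∈ T w1, N (w1 + w2) - t1 ≤ N w2 :=
      fun t1 ht1 => hNge _ _ (fun t2 ht2 => by linarith [key t1 ht1 t2 ht2])
    have h2 : N (w1 + w2) - N w2 ≤ N w1 :=
      hNge _ _ (fun t1 ht1 => by linarith [h1 t1 ht1])
    linarith
  have hN0 : 0 ≤ N 0 := by
    refine hNge 0 0 ?_
    rintro t ⟨lam, hlam, rfl⟩
    have h1 := h lam hlam
    simp only [zero_add]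
    linarith
  obtain ⟨g, -, hg⟩ := exists_extension_of_le_sublinear ⟨⊥, 0⟩ N
    (fun a ha w => hNhom a ha w) hNadd
    (fun x => by
      have hx0 : (x : X) = 0 := by
        have h2 : (x : X) ∈ (⊥ : Submodule ℝ X) := x.2
        exact (Submodule.mem_bot ℝ).mp h2
      simp only [LinearPMap.mk_apply, LinearMap.zero_apply]
      rw [hx0]
      exact hN0)
  have hgbound : ∀ w, ‖g w‖ ≤ R * ‖w‖ := by
    intro w
    have h1 : g w ≤ R * ‖w‖ := le_trans (hg w) (hNnorm w)
    have h2 : g (-w) ≤ R * ‖w‖ := by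
      have := le_trans (hg (-w)) (hNnorm (-w))
      rwa [norm_neg] at this
    rw [map_neg] at h2
    rw [Real.norm_eq_abs, abs_le]
    constructor <;> linarith
  set p : StrongDual ℝ X := LinearMap.mkContinuous g R hgbound with hpdef
  refine ⟨p, LinearMap.mkContinuous_norm_le g hR hgbound, ?_⟩
  intro i hi
  have hmem : R * ‖-u i + ∑ j ∈ s, (if j = i then (1:ℝ) else 0) • u j‖
      - ∑ j ∈ s, (if j = i then (1:ℝ) else 0) * c j ∈ T (-u i) := by
    refine ⟨fun j => if j = i then 1 else 0, fun j _ => by positivity, rfl⟩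
  have hsum1 : ∑ j ∈ s, (if j = i then (1:ℝ) else 0) • u j = u i := by
    rw [Finset.sum_eq_single i]
    · simp
    · intro j _ hj; simp [hj]
    · intro hnot; exact absurd hi hnot
  have hsum2 : ∑ j ∈ s, (if j = i then (1:ℝ) else 0) * c j = c i := by
    rw [Finset.sum_eq_single i]
    · simp
    · intro j _ hj; simp [hj]
    · intro hnot; exact absurd hi hnot
  have hval : N (-u i) ≤ -c i := by
    have := hNle _ _ hmem
    rw [hsum1, hsum2] at this
    simpa using this
  have h1 : g (-u i) ≤ -c i := le_trans (hg _) hval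
  rw [map_neg] at h1
  have : p (u i) = g (u i) := rfl
  rw [this]
  linarith

/-- If the norm-consistency criterion holds for all finite subfamilies of the graph of a
maximal monotone operator, then `z` is in the domain (Banach–Alaoglu + maximality). -/
lemma ud_mem_dom_of_criterion {A : X → Set (StrongDual ℝ X)} (hA : IsMaxMonotoneOp A)
    (z : X) {R : ℝ} (hR : 0 ≤ R)
    (hcrit : ∀ s : Finset (X × StrongDual ℝ X), (∀ e ∈ s, e.2 ∈ A e.1) →
      ∀ lam : X × StrongDual ℝ X → ℝ, (∀ e ∈ s, 0 ≤ lam e) →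
        ∑ e ∈ s, lam e * (e.2 (z - e.1)) ≤ R * ‖∑ e ∈ s, lam e • (z - e.1)‖) :
    z ∈ opDom A := by
  classical
  set K : Set (WeakDual ℝ X) := WeakDual.toStrongDual ⁻¹' Metric.closedBall 0 R with hKdef
  have hKcompact : IsCompact K := WeakDual.isCompact_closedBall (0 : StrongDual ℝ X) R
  set C : X × StrongDual ℝ X → Set (WeakDual ℝ X) :=
    fun e => {p | e.2 ∈ A e.1 → e.2 (z - e.1) ≤ p (z - e.1)} with hCdef
  have hCc : ∀ e, IsClosed (C e) := by
    intro e
    by_cases he : e.2 ∈ A e.1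
    · have : C e = {p : WeakDual ℝ X | e.2 (z - e.1) ≤ p (z - e.1)} := by
        ext p; simp [hCdef, he]
      rw [this]
      exact isClosed_le continuous_const (WeakDual.eval_continuous _)
    · have : C e = Set.univ := by
        ext p; simp [hCdef, he]
      rw [this]; exact isClosed_univ
  have hfin : ∀ u : Finset (X × StrongDual ℝ X), (K ∩ ⋂ e ∈ u, C e).Nonempty := by
    intro u
    set s : Finset (X × StrongDual ℝ X) := u.filter (fun e => e.2 ∈ A e.1) with hsdef
    have hsgraph : ∀ e ∈ s, e.2 ∈ A e.1 := fun e he => (Finset.mem_filter.1 he).2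
    obtain ⟨p, hpnorm, hp⟩ := ud_exists_dual_of_criterion s (fun e => z - e.1)
      (fun e => e.2 (z - e.1)) hR (hcrit s hsgraph)
    refine ⟨StrongDual.toWeakDual p, ?_, ?_⟩
    · simp only [hKdef, Set.mem_preimage]
      rw [Metric.mem_closedBall, dist_zero_right]
      exact hpnorm
    · simp only [Set.mem_iInter]
      intro e he
      intro hemem
      have hes : e ∈ s := Finset.mem_filter.2 ⟨he, hemem⟩
      exact hp e hes
  by_contra hz
  have hempty : K ∩ ⋂ e, C e = ∅ := by
    rw [Set.eq_empty_iff_forall_notMem]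
    rintro pw ⟨hpK, hpC⟩
    set p : StrongDual ℝ X := WeakDual.toStrongDual pw with hpdef
    have hrel : ∀ y (q : StrongDual ℝ X), q ∈ A y → 0 ≤ (p - q) (z - y) := by
      intro y q hq
      have := (Set.mem_iInter.1 hpC (y, q)) hq
      simp only [ContinuousLinearMap.sub_apply]
      have hpe : p (z - y) = pw (z - y) := rfl
      rw [hpe]
      linarith
    exact hz ⟨p, ud_mem_of_rel hA hrel⟩
  obtain ⟨u, hu⟩ := hKcompact.elim_finite_subfamily_closed C hCc hempty
  obtain ⟨pw, hpw⟩ := hfin u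
  rw [Set.eq_empty_iff_forall_notMem] at hu
  exact hu pw hpw

set_option maxHeartbeats 1600000 in
/-- Core criterion estimate along a segment from a domain point into a ball where the
operator is bounded. -/
lemma ud_core {A : X → Set (StrongDual ℝ X)} (hmono : IsMonotoneOp A)
    {x0 v w0 : X} {a0 : StrongDual ℝ X} (ha0 : a0 ∈ A x0)
    {r0 M : ℝ} (hr0 : 0 < r0) (hM : 0 ≤ M)
    (hdom : ∀ w, dist w v < r0 → w ∈ opDom A)
    (hbd : ∀ ⦃w⦄, dist w v < r0 → ∀ ⦃b⦄, b ∈ A w → ‖b‖ ≤ M)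
    {t : ℝ} (ht : 0 < t) (ht1 : t ≤ 1) (hw0 : dist w0 v < r0/2) :
    ∃ R ≥ (0:ℝ), ∀ s : Finset (X × StrongDual ℝ X), (∀ e ∈ s, e.2 ∈ A e.1) →
      ∀ lam : X × StrongDual ℝ X → ℝ, (∀ e ∈ s, 0 ≤ lam e) →
      ∑ e ∈ s, lam e = 1 →
      ∑ e ∈ s, lam e * (e.2 (((1-t) • x0 + t • w0) - e.1))
        ≤ R * ‖((1-t) • x0 + t • w0) - ∑ e ∈ s, lam e • e.1‖ := by
  classical
  set z : X := (1-t) • x0 + t • w0 with hzdef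
  set η : ℝ := r0/2 - dist w0 v with hηdef
  have hηpos : 0 < η := by rw [hηdef]; linarith
  set D1 : ℝ := ‖w0 - z‖ + η with hD1def
  set D2 : ℝ := ‖x0 - z‖ with hD2def
  set K0 : ℝ := t*M*D1 + (1-t)*‖a0‖*D2 with hK0def
  set R0 : ℝ := t*M + (1-t)*‖a0‖ with hR0def
  have hD1pos : 0 ≤ D1 := by positivity
  have hK0nonneg : 0 ≤ K0 := by
    rw [hK0def]
    have h1 : (0:ℝ) ≤ 1 - t := by linarith
    positivity
  have hR0nonneg : 0 ≤ R0 := by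
    rw [hR0def]
    have h1 : (0:ℝ) ≤ 1 - t := by linarith
    positivity
  refine ⟨R0 + K0/(t*η), by positivity, ?_⟩
  intro s hs lam hlam hsum
  set yb : X := ∑ e ∈ s, lam e • e.1 with hybdef
  set g : StrongDual ℝ X := ∑ e ∈ s, lam e • e.2 with hgdef
  set S : ℝ := ∑ e ∈ s, lam e * (e.2 (z - e.1)) with hSdef
  set β : ℝ := ‖z - yb‖ with hβdef
  have hβnonneg : 0 ≤ β := norm_nonneg _
  have hgeval : ∀ w : X, g w = ∑ e ∈ s, lam e * (e.2 w) := by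
    intro w
    rw [hgdef]
    rw [ContinuousLinearMap.sum_apply]
    exact Finset.sum_congr rfl fun e _ => by
      rw [ContinuousLinearMap.smul_apply]; rfl
  -- (F1)  S ≤ g (z - yb)
  have hF1 : S ≤ g (z - yb) := by
    have hT : ∑ e ∈ s, lam e * (e.2 (yb - e.1)) ≤ 0 := by
      have hexp : ∀ e ∈ s, lam e * (e.2 (yb - e.1))
          = ∑ f ∈ s, lam e * lam f * (e.2 (f.1 - e.1)) := by
        intro e he
        have h2 : (e.2 yb : ℝ) = ∑ f ∈ s, lam f * (e.2 f.1) := by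
          rw [hybdef, map_sum]
          exact Finset.sum_congr rfl fun f _ => by rw [map_smul]; rfl
        have h3 : (e.2 e.1 : ℝ) = ∑ f ∈ s, lam f * (e.2 e.1) := by
          rw [← Finset.sum_mul, hsum, one_mul]
        have h1 : (e.2 (yb - e.1) : ℝ) = ∑ f ∈ s, lam f * (e.2 (f.1 - e.1)) := by
          rw [map_sub, h2, h3, ← Finset.sum_sub_distrib]
          exact Finset.sum_congr rfl fun f _ => by rw [map_sub]; ring
        rw [h1, Finset.mul_sum]
        exact Finset.sum_congr rfl fun f _ => by ring
      rw [Finset.sum_congr rfl hexp]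
      have hpair : ∀ e ∈ s, ∀ f ∈ s,
          lam e * lam f * (e.2 (f.1 - e.1)) + lam f * lam e * (f.2 (e.1 - f.1)) ≤ 0 := by
        intro e he f hf
        have hm := hmono (hs e he) (hs f hf)
        have hl : 0 ≤ lam e * lam f := mul_nonneg (hlam e he) (hlam f hf)
        simp only [ContinuousLinearMap.sub_apply, map_sub] at hm ⊢
        nlinarith [hm, hl]
      have hswap : ∑ e ∈ s, ∑ f ∈ s, lam f * lam e * (f.2 (e.1 - f.1))
          = ∑ e ∈ s, ∑ f ∈ s, lam e * lam f * (e.2 (f.1 - e.1)) := by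
        rw [Finset.sum_comm]
      have hdouble : (∑ e ∈ s, ∑ f ∈ s, lam e * lam f * (e.2 (f.1 - e.1))) * 2
          = ∑ e ∈ s, ∑ f ∈ s,
            (lam e * lam f * (e.2 (f.1 - e.1)) + lam f * lam e * (f.2 (e.1 - f.1))) := by
        have hsplit : ∑ e ∈ s, ∑ f ∈ s,
            (lam e * lam f * (e.2 (f.1 - e.1)) + lam f * lam e * (f.2 (e.1 - f.1)))
            = (∑ e ∈ s, ∑ f ∈ s, lam e * lam f * (e.2 (f.1 - e.1)))
              + ∑ e ∈ s, ∑ f ∈ s, lam f * lam e * (f.2 (e.1 - f.1)) := by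
          rw [← Finset.sum_add_distrib]
          exact Finset.sum_congr rfl fun e _ => Finset.sum_add_distrib
        rw [hsplit, hswap]; ring
      have hneg : ∑ e ∈ s, ∑ f ∈ s,
          (lam e * lam f * (e.2 (f.1 - e.1)) + lam f * lam e * (f.2 (e.1 - f.1))) ≤ 0 :=
        Finset.sum_nonpos fun e he => Finset.sum_nonpos fun f hf => hpair e he f hf
      nlinarith [hdouble, hneg]
    have heq : g (z - yb) = ∑ e ∈ s, lam e * (e.2 (z - yb)) := hgeval _
    have hdiff : S - g (z - yb) = ∑ e ∈ s, lam e * (e.2 (yb - e.1)) := by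
      rw [heq, hSdef, ← Finset.sum_sub_distrib]
      refine Finset.sum_congr rfl fun e _ => ?_
      have : (e.2 (z - e.1) : ℝ) - e.2 (z - yb) = e.2 (yb - e.1) := by
        rw [← map_sub]
        congr 1
        abel
      rw [← this]; ring
    linarith [hdiff ▸ hT]
  -- (F2)
  have hF2 : ∀ w1 : X, ∀ b1 : StrongDual ℝ X, b1 ∈ A w1 →
      S ≤ g (z - w1) + b1 (w1 - yb) := by
    intro w1 b1 hb1
    have hb1yb : (b1 (w1 - yb) : ℝ) = ∑ e ∈ s, lam e * (b1 (w1 - e.1)) := by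
      have h2 : (b1 yb : ℝ) = ∑ f ∈ s, lam f * (b1 f.1) := by
        rw [hybdef, map_sum]
        exact Finset.sum_congr rfl fun f _ => by rw [map_smul]; rfl
      have h3 : (b1 w1 : ℝ) = ∑ f ∈ s, lam f * (b1 w1) := by
        rw [← Finset.sum_mul, hsum, one_mul]
      rw [map_sub, h2, h3, ← Finset.sum_sub_distrib]
      exact Finset.sum_congr rfl fun f _ => by rw [map_sub]; ring
    have hterm : ∀ e ∈ s, lam e * (e.2 (z - e.1))
        ≤ lam e * (e.2 (z - w1)) + lam e * (b1 (w1 - e.1)) := by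
      intro e he
      have h1 : (e.2 (z - e.1) : ℝ) = e.2 (z - w1) + e.2 (w1 - e.1) := by
        rw [← map_add]; congr 1; abel
      have h2 : (e.2 (w1 - e.1) : ℝ) ≤ b1 (w1 - e.1) := ud_single_le hmono (hs e he) hb1
      have h3 := mul_le_mul_of_nonneg_left h2 (hlam e he)
      calc lam e * (e.2 (z - e.1)) = lam e * (e.2 (z - w1)) + lam e * (e.2 (w1 - e.1)) := by
            rw [h1]; ring
      _ ≤ lam e * (e.2 (z - w1)) + lam e * (b1 (w1 - e.1)) := by linarith
    calc S ≤ ∑ e ∈ s, (lam e * (e.2 (z - w1)) + lam e * (b1 (w1 - e.1))) :=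
          Finset.sum_le_sum hterm
    _ = (∑ e ∈ s, lam e * (e.2 (z - w1))) + ∑ e ∈ s, lam e * (b1 (w1 - e.1)) :=
          Finset.sum_add_distrib
    _ = g (z - w1) + b1 (w1 - yb) := by rw [hgeval, hb1yb]
  -- main directional bound
  have hdir : ∀ d : X, ‖d‖ ≤ 1 →
      (t*η) * (g d) ≤ K0 + R0 * β - S := by
    intro d hd
    set w1 : X := w0 + η • d with hw1def
    have hw1v : dist w1 v < r0 := by
      have h1 : dist w1 w0 ≤ η := by
        rw [hw1def, dist_eq_norm]
        have : w0 + η • d - w0 = η • d := by abel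
        rw [this, norm_smul, Real.norm_eq_abs, abs_of_pos hηpos]
        nlinarith
      calc dist w1 v ≤ dist w1 w0 + dist w0 v := dist_triangle _ _ _
      _ ≤ η + dist w0 v := by linarith
      _ = r0/2 := by rw [hηdef]; ring
      _ < r0 := by linarith
    obtain ⟨b1, hb1⟩ := hdom w1 hw1v
    have hb1M : ‖b1‖ ≤ M := hbd hw1v hb1
    have hi : S ≤ g (z - w1) + b1 (w1 - yb) := hF2 w1 b1 hb1
    have hii : S ≤ g (z - x0) + a0 (x0 - yb) := hF2 x0 a0 ha0
    have hi' : t * S ≤ t * (g (z - w1)) + t * (b1 (w1 - yb)) := by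
      have := mul_le_mul_of_nonneg_left hi ht.le
      rw [mul_add] at this
      exact this
    have hii' : (1-t) * S ≤ (1-t) * (g (z - x0)) + (1-t) * (a0 (x0 - yb)) := by
      have h0 : (0:ℝ) ≤ 1 - t := by linarith
      have := mul_le_mul_of_nonneg_left hii h0
      rw [mul_add] at this
      exact this
    have hgcomb : t * (g (z - w1)) + (1-t) * (g (z - x0)) = -((t*η) * (g d)) := by
      have h1 : t • (z - w1) + (1-t) • (z - x0) = -((t*η) • d) := by
        rw [hzdef, hw1def]; module
      calc t * (g (z - w1)) + (1-t) * (g (z - x0)) = g (t • (z - w1) + (1-t) • (z - x0)) := by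
            rw [map_add, map_smul, map_smul]; rfl
      _ = g (-((t*η) • d)) := by rw [h1]
      _ = -((t*η) * (g d)) := by rw [map_neg, map_smul]; rfl
    have hb1bd : (b1 (w1 - yb) : ℝ) ≤ M * (D1 + β) := by
      have h1 : ‖w1 - yb‖ ≤ D1 + β := by
        have h2 : w1 - yb = (w1 - z) + (z - yb) := by abel
        have h3 : ‖w1 - z‖ ≤ D1 := by
          have h4 : w1 - z = (w0 - z) + η • d := by rw [hw1def]; abel
          calc ‖w1 - z‖ ≤ ‖w0 - z‖ + ‖η • d‖ := by rw [h4]; exact norm_add_le _ _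
          _ ≤ ‖w0 - z‖ + η := by
              rw [norm_smul, Real.norm_eq_abs, abs_of_pos hηpos]
              nlinarith
          _ = D1 := by rw [hD1def]
        calc ‖w1 - yb‖ ≤ ‖w1 - z‖ + ‖z - yb‖ := by rw [h2]; exact norm_add_le _ _
        _ ≤ D1 + β := by rw [hβdef]; linarith
      calc (b1 (w1 - yb) : ℝ) ≤ ‖b1 (w1 - yb)‖ := le_abs_self _
      _ ≤ ‖b1‖ * ‖w1 - yb‖ := b1.le_opNorm _
      _ ≤ M * (D1 + β) := by nlinarith [norm_nonneg b1, norm_nonneg (w1 - yb)]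
    have ha0bd : (a0 (x0 - yb) : ℝ) ≤ ‖a0‖ * (D2 + β) := by
      have h1 : ‖x0 - yb‖ ≤ D2 + β := by
        have h2 : x0 - yb = (x0 - z) + (z - yb) := by abel
        calc ‖x0 - yb‖ ≤ ‖x0 - z‖ + ‖z - yb‖ := by rw [h2]; exact norm_add_le _ _
        _ = D2 + β := by rw [hD2def, hβdef]
      calc (a0 (x0 - yb) : ℝ) ≤ ‖a0 (x0 - yb)‖ := le_abs_self _
      _ ≤ ‖a0‖ * ‖x0 - yb‖ := a0.le_opNorm _
      _ ≤ ‖a0‖ * (D2 + β) := by nlinarith [norm_nonneg a0, norm_nonneg (x0 - yb)]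
    have ht' : (0:ℝ) ≤ 1 - t := by linarith
    have hKR : t * (M * (D1 + β)) + (1-t) * (‖a0‖ * (D2 + β)) = K0 + R0 * β := by
      rw [hK0def, hR0def]; ring
    have hb1' := mul_le_mul_of_nonneg_left hb1bd ht.le
    have ha0' := mul_le_mul_of_nonneg_left ha0bd ht'
    have hSsplit : S = t * S + (1-t) * S := by ring
    linarith [hi', hii', hgcomb, hb1', ha0', hKR, hSsplit]
  -- deduce norm bound on g
  have hCb : 0 ≤ K0 + R0 * β - S := by
    have := hdir 0 (by simp)
    simpa using this
  have htη : 0 < t*η := by positivity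
  have hgnorm : ‖g‖ ≤ (K0 + R0 * β - S)/(t*η) := by
    refine g.opNorm_le_bound (by positivity) fun u => ?_
    rcases eq_or_ne u 0 with rfl | hu0
    · simp
    · have hnu : 0 < ‖u‖ := norm_pos_iff.2 hu0
      set d : X := ‖u‖⁻¹ • u with hddef
      have hdn : ‖d‖ ≤ 1 := by
        rw [hddef, norm_smul, Real.norm_eq_abs, abs_of_pos (by positivity)]
        rw [inv_mul_cancel₀ hnu.ne']
      have h1 : (t*η) * (g d) ≤ K0 + R0 * β - S := hdir d hdn
      have h2 : (t*η) * (g (-d)) ≤ K0 + R0 * β - S := by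
        refine hdir _ ?_
        rwa [norm_neg]
      rw [map_neg] at h2
      have habsd : |g d| ≤ (K0 + R0 * β - S)/(t*η) := by
        rw [abs_le]
        constructor
        · have h2' : (-(g d)) ≤ (K0 + R0 * β - S)/(t*η) := by
            rw [le_div_iff₀ htη]
            nlinarith [h2]
          linarith
        · rw [le_div_iff₀ htη]
          nlinarith [h1]
      have hud : u = ‖u‖ • d := by
        rw [hddef, smul_smul, mul_inv_cancel₀ hnu.ne', one_smul]
      have hgu : (g u : ℝ) = ‖u‖ * g d := by
        conv_lhs => rw [hud]
        rw [map_smul]; rfl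
      have : ‖g u‖ = |g u| := rfl
      rw [this, hgu, abs_mul, abs_of_pos hnu, mul_comm]
      exact mul_le_mul_of_nonneg_right habsd (norm_nonneg u)
  -- conclude
  have hring : (R0 + K0/(t*η)) * β = R0 * β + K0/(t*η) * β := by ring
  by_cases hc : K0 ≤ (t*η) * ‖g‖
  · have h1 : (t*η) * ‖g‖ ≤ K0 + R0 * β - S := by
      calc (t*η) * ‖g‖ ≤ (t*η) * ((K0 + R0 * β - S)/(t*η)) :=
            mul_le_mul_of_nonneg_left hgnorm htη.le
      _ = K0 + R0 * β - S := by field_simp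
    have h3 : S ≤ R0 * β := by linarith
    have h4 : 0 ≤ K0/(t*η) * β := by positivity
    calc S ≤ R0 * β := h3
    _ ≤ R0 * β + K0/(t*η) * β := le_add_of_nonneg_right h4
    _ = (R0 + K0/(t*η)) * β := by ring
  · push_neg at hc
    have h1 : S ≤ g (z - yb) := hF1
    have h2 : (g (z - yb) : ℝ) ≤ ‖g‖ * β := by
      calc (g (z - yb) : ℝ) ≤ ‖g (z - yb)‖ := le_abs_self _
      _ ≤ ‖g‖ * ‖z - yb‖ := g.le_opNorm _
      _ = ‖g‖ * β := by rw [hβdef]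
    have h3 : ‖g‖ ≤ K0/(t*η) := by
      rw [le_div_iff₀ htη, mul_comm]
      exact hc.le
    have h4 : ‖g‖ * β ≤ K0/(t*η) * β := mul_le_mul_of_nonneg_right h3 hβnonneg
    have h5 : 0 ≤ R0 * β := by positivity
    calc S ≤ g (z - yb) := h1
    _ ≤ ‖g‖ * β := h2
    _ ≤ K0/(t*η) * β := h4
    _ ≤ R0 * β + K0/(t*η) * β := le_add_of_nonneg_left h5
    _ = (R0 + K0/(t*η)) * β := by ring

/-- Segment lemma: the open segment from a point of the domain to an interior point of the
domain lies in the interior of the domain. -/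
lemma ud_segment_interior [CompleteSpace X] {A : X → Set (StrongDual ℝ X)}
    (hA : IsMaxMonotoneOp A) {x0 v : X} (hx0 : x0 ∈ opDom A) (hv : v ∈ interior (opDom A))
    {t : ℝ} (ht : 0 < t) (ht1 : t ≤ 1) :
    (1-t) • x0 + t • v ∈ interior (opDom A) := by
  classical
  obtain ⟨a0, ha0⟩ := hx0
  obtain ⟨r0, hr0, M, hM, hdom, hbd⟩ := ud_loc_bdd hA.1 hv
  have hdom' : ∀ w, dist w v < r0 → w ∈ opDom A := fun w hw => hdom (Metric.mem_ball.2 hw)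
  have hbd' : ∀ ⦃w⦄, dist w v < r0 → ∀ ⦃b⦄, b ∈ A w → ‖b‖ ≤ M :=
    fun w hw b hb => hbd (Metric.mem_ball.2 hw) hb
  have hmem : ∀ w0 : X, dist w0 v < r0/2 → (1-t) • x0 + t • w0 ∈ opDom A := by
    intro w0 hw0
    obtain ⟨R, hR, hcore⟩ := ud_core hA.1 ha0 hr0 hM hdom' hbd' ht ht1 hw0
    set z : X := (1-t) • x0 + t • w0 with hzdef
    refine ud_mem_dom_of_criterion hA z hR ?_
    intro s hs lam hlam
    have hΛnn : 0 ≤ ∑ e ∈ s, lam e := Finset.sum_nonneg hlam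
    rcases eq_or_lt_of_le hΛnn with hΛ | hΛ
    · have hall : ∀ e ∈ s, lam e = 0 := (Finset.sum_eq_zero_iff_of_nonneg hlam).1 hΛ.symm
      have hL : ∑ e ∈ s, lam e * (e.2 (z - e.1)) = 0 :=
        Finset.sum_eq_zero fun e he => by rw [hall e he]; ring
      have hRv : ∑ e ∈ s, lam e • (z - e.1) = (0:X) :=
        Finset.sum_eq_zero fun e he => by rw [hall e he]; simp
      rw [hL, hRv, norm_zero, mul_zero]
    · set Λ : ℝ := ∑ e ∈ s, lam e with hΛdef
      set lam' : X × StrongDual ℝ X → ℝ := fun e => lam e / Λ with hlam'def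
      have hlam'nn : ∀ e ∈ s, 0 ≤ lam' e := fun e he => div_nonneg (hlam e he) hΛ.le
      have hsum' : ∑ e ∈ s, lam' e = 1 := by
        rw [hlam'def]
        rw [← Finset.sum_div]
        exact div_self hΛ.ne'
      have hcore' := hcore s hs lam' hlam'nn hsum'
      have hlamval : ∀ e, lam e = Λ * lam' e := by
        intro e
        rw [hlam'def]
        field_simp
      have hLHS : ∑ e ∈ s, lam e * (e.2 (z - e.1))
          = Λ * ∑ e ∈ s, lam' e * (e.2 (z - e.1)) := by
        rw [Finset.mul_sum]
        exact Finset.sum_congr rfl fun e _ => by rw [hlamval e]; ring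
      have hvec : ∑ e ∈ s, lam e • (z - e.1) = Λ • (z - ∑ e ∈ s, lam' e • e.1) := by
        have h1 : ∑ e ∈ s, lam e • (z - e.1)
            = (∑ e ∈ s, lam e) • z - ∑ e ∈ s, lam e • e.1 := by
          rw [Finset.sum_smul, ← Finset.sum_sub_distrib]
          exact Finset.sum_congr rfl fun e _ => smul_sub _ _ _
        have h2 : Λ • (z - ∑ e ∈ s, lam' e • e.1)
            = Λ • z - ∑ e ∈ s, lam e • e.1 := by
          rw [smul_sub, Finset.smul_sum]
          congr 1
          exact Finset.sum_congr rfl fun e _ => by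
            rw [smul_smul, ← hlamval e]
        rw [h1, h2, hΛdef]
      have hnorm : ‖∑ e ∈ s, lam e • (z - e.1)‖
          = Λ * ‖z - ∑ e ∈ s, lam' e • e.1‖ := by
        rw [hvec, norm_smul, Real.norm_eq_abs, abs_of_pos hΛ]
      rw [hLHS, hnorm]
      calc Λ * ∑ e ∈ s, lam' e * (e.2 (z - e.1))
          ≤ Λ * (R * ‖z - ∑ e ∈ s, lam' e • e.1‖) := by
            exact mul_le_mul_of_nonneg_left hcore' hΛ.le
      _ = R * (Λ * ‖z - ∑ e ∈ s, lam' e • e.1‖) := by ring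
  refine mem_interior.2 ⟨Metric.ball ((1-t) • x0 + t • v) (t*r0/4), ?_,
    Metric.isOpen_ball, Metric.mem_ball_self (by positivity)⟩
  intro z' hz'
  set c : X := (1-t) • x0 + t • v with hcdef
  have hz'eq : z' = (1-t) • x0 + t • (v + t⁻¹ • (z' - c)) := by
    have h1 : t • (t⁻¹ • (z' - c)) = z' - c := by
      rw [smul_smul, mul_inv_cancel₀ ht.ne', one_smul]
    rw [smul_add, h1, hcdef]
    abel
  rw [hz'eq]
  apply hmem
  have h2 : dist (v + t⁻¹ • (z' - c)) v = t⁻¹ * ‖z' - c‖ := by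
    rw [dist_eq_norm]
    have : v + t⁻¹ • (z' - c) - v = t⁻¹ • (z' - c) := by abel
    rw [this, norm_smul, Real.norm_eq_abs, abs_of_pos (by positivity)]
  rw [h2]
  have h3 : ‖z' - c‖ < t*r0/4 := by
    rw [← dist_eq_norm]
    exact Metric.mem_ball.1 hz'
  calc t⁻¹ * ‖z' - c‖ < t⁻¹ * (t*r0/4) := by
        exact mul_lt_mul_of_pos_left h3 (by positivity)
  _ = r0/4 := by field_simp
  _ < r0/2 := by linarith

lemma ud_cluster_ge {φ r : ℕ → ℝ} {L c0 : ℝ} (hcl : MapClusterPt L atTop φ)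
    (hge : ∀ᶠ n in atTop, r n ≤ φ n) (hr : Tendsto r atTop (𝓝 c0)) : c0 ≤ L := by
  by_contra hlt
  push_neg at hlt
  set ε : ℝ := (c0 - L)/2 with hεdef
  have hεpos : 0 < ε := by rw [hεdef]; linarith
  have hU : Set.Iio (L + ε) ∈ 𝓝 L := Iio_mem_nhds (by linarith)
  have hfreq := (mapClusterPt_iff_frequently.1 hcl) _ hU
  have hev : ∀ᶠ n in atTop, L + ε ≤ φ n := by
    have hev2 : ∀ᶠ n in atTop, r n ∈ Set.Ioi (c0 - ε) := hr (Ioi_mem_nhds (by linarith))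
    filter_upwards [hge, hev2] with n h1 h2
    have h3 : c0 - ε = L + ε := by rw [hεdef]; ring
    have h4 : c0 - ε < r n := h2
    linarith
  obtain ⟨n, h1, h2⟩ := (hfreq.and_eventually hev).exists
  have : φ n < L + ε := h1
  linarith

/-- Along a dense set with common selections and local boundedness, values of the two maximal
monotone operators intersect. -/
lemma ud_meet [CompleteSpace X] {A B : X → Set (StrongDual ℝ X)}
    (hA : IsMaxMonotoneOp A) (hB : IsMaxMonotoneOp B) {D : Set X}
    (hmeet : ∀ x ∈ D, (A x ∩ B x).Nonempty)
    {z : X} (hz : z ∈ interior (opDom A)) (hzD : z ∈ closure D) :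
    (A z ∩ B z).Nonempty := by
  classical
  obtain ⟨r, hr, M, hM, _, hbd⟩ := ud_loc_bdd hA.1 hz
  have hseq : ∀ n : ℕ, ∃ d, d ∈ D ∧ dist z d < min r (1/(n+1)) := by
    intro n
    exact Metric.mem_closure_iff.1 hzD _ (lt_min hr (by positivity))
  choose dseq hdseqD hdseqlt using hseq
  have hdist1 : ∀ n, dist z (dseq n) < r :=
    fun n => lt_of_lt_of_le (hdseqlt n) (min_le_left _ _)
  have hdist2 : ∀ n, dist z (dseq n) < 1/(n+1) :=
    fun n => lt_of_lt_of_le (hdseqlt n) (min_le_right _ _)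
  have hmeetn : ∀ n, ∃ c, c ∈ A (dseq n) ∧ c ∈ B (dseq n) := fun n => hmeet (dseq n) (hdseqD n)
  choose cseq hcseqA hcseqB using hmeetn
  have hcbd : ∀ n, ‖cseq n‖ ≤ M := by
    intro n
    refine hbd ?_ (hcseqA n)
    rw [Metric.mem_ball, dist_comm]
    exact hdist1 n
  set K : Set (WeakDual ℝ X) := WeakDual.toStrongDual ⁻¹' Metric.closedBall 0 M with hKdef
  have hKc : IsCompact K := WeakDual.isCompact_closedBall (0 : StrongDual ℝ X) M
  set cw : ℕ → WeakDual ℝ X := fun n => StrongDual.toWeakDual (cseq n) with hcwdef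
  have hle : map cw atTop ≤ 𝓟 K := by
    rw [le_principal_iff]
    refine Filter.mem_map.2 (Filter.Eventually.mono (Filter.eventually_true _) fun n _ => ?_)
    show cw n ∈ K
    rw [hKdef]
    simp only [Set.mem_preimage]
    rw [Metric.mem_closedBall, dist_zero_right]
    exact hcbd n
  obtain ⟨pw, hpwK, hpwcl⟩ := hKc.exists_clusterPt hle
  set p : StrongDual ℝ X := WeakDual.toStrongDual pw with hpdef
  have hd0 : Tendsto (fun n => dist z (dseq n)) atTop (𝓝 0) := by
    refine squeeze_zero (fun n => dist_nonneg) (fun n => (hdist2 n).le) ?_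
    exact tendsto_one_div_add_atTop_nhds_zero_nat
  have hdz : Tendsto dseq atTop (𝓝 z) := by
    rw [tendsto_iff_dist_tendsto_zero]
    simpa [dist_comm] using hd0
  have hmain : ∀ (T : X → Set (StrongDual ℝ X)), IsMaxMonotoneOp T →
      (∀ n, cseq n ∈ T (dseq n)) → p ∈ T z := by
    intro T hT hc
    apply ud_mem_of_rel hT
    intro y q hq
    have hclev : MapClusterPt (pw (z - y)) atTop (fun n => cw n (z - y)) := by
      have h0 : MapClusterPt pw atTop cw := hpwcl
      have h1 := h0.continuousAt_comp
        (f := fun h : WeakDual ℝ X => h (z - y)) (WeakDual.eval_continuous (z - y)).continuousAt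
      exact h1
    set rseq : ℕ → ℝ := fun n => q (dseq n - y) - M * dist z (dseq n) with hrseqdef
    have hge : ∀ n, rseq n ≤ cw n (z - y) := by
      intro n
      have h1 : q (dseq n - y) ≤ cseq n (dseq n - y) := ud_single_le hT.1 hq (hc n)
      have habs : |cseq n (z - dseq n)| ≤ M * dist z (dseq n) := by
        rw [dist_eq_norm]
        calc |cseq n (z - dseq n)| ≤ ‖cseq n‖ * ‖z - dseq n‖ := (cseq n).le_opNorm _
        _ ≤ M * ‖z - dseq n‖ := mul_le_mul_of_nonneg_right (hcbd n) (norm_nonneg _)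
      have h2 : -(M * dist z (dseq n)) ≤ cseq n (z - dseq n) := by
        have := neg_abs_le (cseq n (z - dseq n))
        linarith
      have h3 : (cw n (z - y) : ℝ) = cseq n (dseq n - y) + cseq n (z - dseq n) := by
        have : cw n (z - y) = cseq n (z - y) := rfl
        rw [this, ← map_add]
        congr 1
        abel
      rw [h3, hrseqdef]
      dsimp only
      linarith
    have hrlim : Tendsto rseq atTop (𝓝 (q (z - y))) := by
      have h1 : Tendsto (fun n => q (dseq n - y)) atTop (𝓝 (q (z - y))) := by
        have h2 : Tendsto (fun n => dseq n - y) atTop (𝓝 (z - y)) := hdz.sub_const y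
        exact (q.continuous.tendsto _).comp h2
      have h2 : Tendsto (fun n => M * dist z (dseq n)) atTop (𝓝 0) := by
        simpa using hd0.const_mul M
      have h3 := h1.sub h2
      rw [sub_zero] at h3
      exact h3
    have hgoal : q (z - y) ≤ pw (z - y) :=
      ud_cluster_ge hclev (Filter.Eventually.of_forall hge) hrlim
    have hpe : (p (z - y) : ℝ) = pw (z - y) := rfl
    simp only [ContinuousLinearMap.sub_apply, map_sub] at hpe ⊢
    simp only [map_sub] at hgoal
    linarith
  exact ⟨p, hmain A hA (fun n => hcseqA n), hmain B hB (fun n => hcseqB n)⟩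

end UniqueDeterminationAux

set_option maxHeartbeats 1000000 in
/-- Unique determination on dense subsets: two maximal monotone operators on a
reflexive Banach space with equal nonempty interiors of domains whose values intersect on a
dense subset of `D(A)` coincide. -/
theorem unique_determination_on_dense_subset
    [CompleteSpace X] (hrefl : IsReflexiveSp X)
    (A B : X → Set (StrongDual ℝ X))
    (hA : IsMaxMonotoneOp A) (hB : IsMaxMonotoneOp B)
    (hint : interior (opDom A) = interior (opDom B))
    (hne : (interior (opDom A)).Nonempty)
    (D : Set X) (hD : D ⊆ opDom A) (hdense : opDom A ⊆ closure D)
    (hmeet : ∀ x ∈ D, (A x ∩ B x).Nonempty) :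
    A = B := by
  classical
  obtain ⟨v, hv⟩ := hne
  have hvB : v ∈ interior (opDom B) := hint ▸ hv
  have hvdom : v ∈ opDom A := interior_subset hv
  obtain ⟨qv, hqv⟩ := hvdom
  have hrel : ∀ (x : X) (p : StrongDual ℝ X), p ∈ B x →
      ∀ (y : X) (a : StrongDual ℝ X), a ∈ A y → 0 ≤ (p - a) (x - y) := by
    intro x p hp y a ha
    set m : X := (2⁻¹ : ℝ) • (x + y) with hmdef
    set Dd : ℝ := p x - p y - a x + a y with hDddef
    set G : ℝ := 4*(2⁻¹*(qv x + qv y) - qv v) - 2*(p x - p v - a v + a y) with hGdef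
    have hineq : ∀ τ : ℝ, 0 < τ → τ ≤ 1/2 → τ * G ≤ (1-τ) * Dd := by
      intro τ hτ hτ12
      have hτ1 : (0:ℝ) < 1 + τ := by linarith
      have h1τ : (0:ℝ) < 1 - τ := by linarith
      set σ : ℝ := (1+τ)/2 with hσdef
      set t : ℝ := 2*τ/(1+τ) with htdef
      have hσpos : 0 < σ := by rw [hσdef]; linarith
      have hσ1 : σ ≤ 1 := by rw [hσdef]; linarith
      have htpos : 0 < t := by rw [htdef]; positivity
      have ht1 : t ≤ 1 := by
        rw [htdef, div_le_one hτ1]; linarith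
      have hσt : σ * t = τ := by
        rw [hσdef, htdef]; field_simp
      have hσ1t : σ * (1 - t) = (1-τ)/2 := by
        have : σ * (1 - t) = σ - σ * t := by ring
        rw [this, hσt, hσdef]; ring
      -- the auxiliary interior points
      have hw : (1-t) • x + t • v ∈ interior (opDom B) :=
        ud_segment_interior hB ⟨p, hp⟩ hvB htpos ht1
      have hwA : (1-t) • x + t • v ∈ interior (opDom A) := by
        rw [hint]; exact hw
      have hz0 : (1-σ) • y + σ • ((1-t) • x + t • v) ∈ interior (opDom A) :=
        ud_segment_interior hA ⟨a, ha⟩ hwA hσpos hσ1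
      have hzeq : (1-σ) • y + σ • ((1-t) • x + t • v) = (1-τ) • m + τ • v := by
        rw [smul_add, smul_smul, smul_smul, hσt, hσ1t, hmdef]
        have h1σ : 1 - σ = (1-τ)/2 := by rw [hσdef]; ring
        rw [h1σ]
        module
      rw [hzeq] at hz0
      set z : X := (1-τ) • m + τ • v with hzdef
      have hzD : z ∈ closure D := hdense (interior_subset hz0)
      obtain ⟨c, hcA, hcB⟩ := ud_meet hA hB hmeet hz0 hzD
      have h1 := hB.1 hp hcB
      have h2 := hA.1 hcA ha
      have h3 := hA.1 hcA hqv
      simp only [ContinuousLinearMap.sub_apply, map_sub] at h1 h2 h3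
      have hev : ∀ f : StrongDual ℝ X, f z = (1-τ)*(2⁻¹*(f x + f y)) + τ*(f v) := by
        intro f
        rw [hzdef, hmdef]
        simp only [map_add, map_smul, smul_eq_mul]
      rw [hev p, hev c] at h1
      rw [hev c, hev a] at h2
      rw [hev c, hev qv] at h3
      -- divide h3 by (1-τ) and multiply by τ
      have h5a : (1-τ) * ((2⁻¹*(qv x + qv y) - qv v)) ≤ (1-τ) * ((2⁻¹*(c x + c y) - c v)) := by
        nlinarith [h3]
      have h5 : (2⁻¹*(qv x + qv y) - qv v) ≤ (2⁻¹*(c x + c y) - c v) :=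
        le_of_mul_le_mul_left (by linarith [h5a]) h1τ
      have h6 : τ * (2⁻¹*(qv x + qv y) - qv v) ≤ τ * (2⁻¹*(c x + c y) - c v) :=
        mul_le_mul_of_nonneg_left h5 hτ.le
      rw [hDddef, hGdef]
      nlinarith [h1, h2, h6]
    -- conclude 0 ≤ Dd from the family of inequalities
    have hfinal : 0 ≤ Dd := by
      clear_value Dd G
      by_contra hDd
      push_neg at hDd
      have hhalf := hineq (1/2) (by norm_num) le_rfl
      norm_num at hhalf
      have hG : G < 0 := by linarith
      have hGne : G ≠ 0 := ne_of_lt hG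
      have hDG : 0 < Dd/(4*G) := div_pos_of_neg_of_neg hDd (by linarith)
      obtain ⟨τ0, hτ0pos, hτ012, hτ0le⟩ :
          ∃ τ0 : ℝ, 0 < τ0 ∧ τ0 ≤ 1/2 ∧ τ0 ≤ Dd/(4*G) :=
        ⟨min (1/2) (Dd/(4*G)), lt_min (by norm_num) hDG, min_le_left _ _, min_le_right _ _⟩
      have hkey := hineq τ0 hτ0pos hτ012
      have hl1 : (1-τ0) * Dd ≤ (1/2) * Dd := by
        nlinarith [mul_nonneg (show (0:ℝ) ≤ 1/2 - τ0 by linarith)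
          (show (0:ℝ) ≤ -Dd by linarith)]
      have hl2 : Dd/4 ≤ τ0 * G := by
        have h9 : (Dd/(4*G)) * G ≤ τ0 * G := by
          nlinarith [mul_nonneg (show (0:ℝ) ≤ Dd/(4*G) - τ0 by linarith)
            (show (0:ℝ) ≤ -G by linarith)]
        have h10 : (Dd/(4*G)) * G = Dd/4 := by
          rw [div_mul_eq_mul_div, mul_comm Dd G, mul_comm (4:ℝ) G,
            mul_div_mul_left Dd 4 hGne]
        linarith
      linarith
    have hgoal : (p - a) (x - y) = Dd := by
      simp only [ContinuousLinearMap.sub_apply, map_sub, hDddef]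
      ring
    rw [hgoal]
    exact hfinal
  have hsub : ∀ x, B x ⊆ A x := fun x p hp =>
    ud_mem_of_rel hA (fun y q hq => hrel x p hp y q hq)
  exact hB.2 A hA.1 hsub
end

section
/- Let X be a reflexive real Banach space and f : X → ℝ a lower semicontinuous convex function that is finite everywhere. If there exist a dense subset D of X and ℓ ≥ 0 such that for every x ∈ D the subdifferential ∂f(x) contains an element of norm at most ℓ, then f is ℓ-Lipschitz continuous on X, i.e., |f(x) − f(y)| ≤ ℓ‖x − y‖ for all x, y ∈ X. -/
open Filter Topology Pointwise

variable {X : Type*} [NormedAddCommGroup X] [NormedSpace ℝ X]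

/-- If a finite-valued lsc convex function on a reflexive Banach space has, at
every point of a dense subset, a subgradient of norm at most `ℓ`, then it is `ℓ`-Lipschitz. -/
theorem lipschitz_of_bounded_subgradients_on_dense
    [CompleteSpace X] (hrefl : IsReflexiveSp X)
    (f : X → ℝ) (hconv : ConvexOn ℝ Set.univ f) (hlsc : LowerSemicontinuous f)
    (D : Set X) (hdense : Dense D) (ℓ : ℝ) (hℓ : 0 ≤ ℓ)
    (hsub : ∀ x ∈ D, ∃ p : StrongDual ℝ X, ‖p‖ ≤ ℓ ∧ ∀ y : X, p (y - x) ≤ f y - f x) :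
    ∀ x y : X, |f x - f y| ≤ ℓ * ‖x - y‖ := by
  have key : ∀ a b : X, f a - f b ≤ ℓ * ‖a - b‖ := by
    intro a b
    have hstep : ∀ ε > (0:ℝ), f a - f b ≤ ℓ * ‖a - b‖ + ε := by
      intro ε hε
      have h1 : ∀ᶠ u in 𝓝 a, f a - ε / 2 < f u := hlsc a (f a - ε / 2) (by linarith)
      have hcont : Continuous fun u : X => ℓ * ‖u - b‖ := by continuity
      have h2 : ∀ᶠ u in 𝓝 a, ℓ * ‖u - b‖ < ℓ * ‖a - b‖ + ε / 2 := by
        have := (hcont.tendsto a).eventually_lt_const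
          (show ℓ * ‖a - b‖ < ℓ * ‖a - b‖ + ε / 2 by linarith)
        exact this
      obtain ⟨u, hu, huD⟩ := hdense.inter_nhds_nonempty (h1.and h2)
      obtain ⟨p, hpℓ, hps⟩ := hsub u hu
      have h3 : f u - f b ≤ ℓ * ‖u - b‖ := by
        have hpb := hps b
        have : -(ℓ * ‖u - b‖) ≤ p (b - u) := by
          have h4 : |p (b - u)| ≤ ‖p‖ * ‖b - u‖ := by
            simpa using p.le_opNorm (b - u)
          have h5 : ‖p‖ * ‖b - u‖ ≤ ℓ * ‖u - b‖ := by
            rw [norm_sub_rev b u]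
            exact mul_le_mul_of_nonneg_right hpℓ (norm_nonneg _)
          have := (abs_le.mp h4).1
          linarith
        linarith
      have ⟨hfu, hnb⟩ := huD
      linarith
    by_contra hcon
    push_neg at hcon
    have := hstep ((f a - f b - ℓ * ‖a - b‖) / 2) (by linarith)
    linarith
  intro x y
  rw [abs_sub_le_iff]
  refine ⟨key x y, ?_⟩
  rw [show ‖x - y‖ = ‖y - x‖ from norm_sub_rev x y]
  exact key y x
end

section
/- Let X be a uniformly convex real Banach space whose topological dual X* is also uniformly convex with (single-valued) duality mapping J : X → X*, and let A : X ⇒ X* be a maximal monotone operator. Let x ∈ D(A), v ∈ X \ {0} and x* ∈ A(x;v), and define B : X ⇒ X* by By := Ay − J(v) − x*. Then B is maximal monotone with D(B) = D(A), −J(v) ∈ Bx, and ‖J(v)‖ ≤ ‖y* − J(v) − x*‖ for every y* ∈ Ax; consequently the minimal-norm selection of B satisfies B°x = −J(v). -/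
open Filter Topology Pointwise

variable {X : Type*} [NormedAddCommGroup X] [NormedSpace ℝ X]

/-- For `x* ∈ A(x;v)` and the (single-valued) duality mapping `J`, the shifted
operator `By = Ay − J(v) − x*` is maximal monotone with `D(B) = D(A)`, `−J(v) ∈ Bx`,
`‖J(v)‖ ≤ ‖y* − J(v) − x*‖` for all `y* ∈ Ax`, and consequently `B°x = −J(v)`. -/
theorem shifted_operator_minSelection
    [CompleteSpace X] [UniformConvexSpace X] [UniformConvexSpace (StrongDual ℝ X)]
    (J : X → StrongDual ℝ X)
    (hJ : ∀ y : X, (J y) y = ‖y‖ ^ 2 ∧ ‖J y‖ = ‖y‖)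
    (A : X → Set (StrongDual ℝ X)) (hA : IsMaxMonotoneOp A)
    (x : X) (hx : x ∈ opDom A) (v : X) (hv : v ≠ 0)
    (p : StrongDual ℝ X) (hp : p ∈ face A x v)
    (B : X → Set (StrongDual ℝ X)) (hB : ∀ y, B y = (fun q => q - J v - p) '' A y) :
    IsMaxMonotoneOp B ∧ opDom B = opDom A ∧ -(J v) ∈ B x ∧
      (∀ q ∈ A x, ‖J v‖ ≤ ‖q - J v - p‖) ∧
      (∀ Bm : X → StrongDual ℝ X, IsMinNormSelection B Bm → Bm x = -(J v)) := by
  obtain ⟨hAmono, hAmax⟩ := hA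
  -- rewrite B as translation by a constant c
  set c : StrongDual ℝ X := J v + p with hc
  have hBc : ∀ y, B y = (fun q => q - c) '' A y := by
    intro y; simp only [hB y, hc, sub_sub]
  -- monotonicity of B
  have hBmono : IsMonotoneOp B := by
    intro x1 y1 x' y' hx' hy'
    rw [hBc] at hx' hy'
    obtain ⟨q1, hq1, rfl⟩ := hx'
    obtain ⟨q2, hq2, rfl⟩ := hy'
    have := hAmono hq1 hq2
    rw [sub_sub_sub_cancel_right]
    exact this
  -- maximality of B
  have hBmax : IsMaxMonotoneOp B := by
    refine ⟨hBmono, ?_⟩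
    intro B' hB'mono hBsub
    have hA' : (fun y => (fun q => q + c) '' B' y) = A := by
      apply hAmax
      · intro x1 y1 x' y' hx' hy'
        obtain ⟨q1, hq1, rfl⟩ := hx'
        obtain ⟨q2, hq2, rfl⟩ := hy'
        have := hB'mono hq1 hq2
        rw [add_sub_add_right_eq_sub]
        exact this
      · intro y q hq
        exact ⟨q - c, hBsub y (by rw [hBc]; exact ⟨q, hq, rfl⟩), by simp⟩
    funext y
    ext q
    constructor
    · intro hq
      rw [hBc]
      have : q + c ∈ A y := by
        rw [← hA']; exact ⟨q, hq, rfl⟩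
      exact ⟨q + c, this, by simp⟩
    · intro hq; exact hBsub y hq
  -- domain equality
  have hdom : opDom B = opDom A := by
    ext y
    simp [opDom, hBc, Set.image_nonempty]
  -- -(J v) ∈ B x
  have hnegJ : -(J v) ∈ B x := by
    rw [hB x]
    exact ⟨p, hp.1, by abel⟩
  -- the norm bound
  have hnorm : ∀ q ∈ A x, ‖J v‖ ≤ ‖q - J v - p‖ := by
    intro q hq
    have hqv : q v ≤ p v := by
      have h1 : ((q v : ℝ) : EReal) ≤ suppFn (A x) v := by
        exact le_iSup₂ (f := fun s (_ : s ∈ A x) => ((s v : ℝ) : EReal)) q hq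
      rw [← hp.2] at h1
      exact_mod_cast h1
    have hJv : (J v) v = ‖v‖ ^ 2 := (hJ v).1
    have hkey : ‖v‖ ^ 2 ≤ -((q - J v - p) v) := by
      simp only [ContinuousLinearMap.sub_apply]
      rw [hJv]; linarith
    have hbd : -((q - J v - p) v) ≤ ‖q - J v - p‖ * ‖v‖ := by
      calc -((q - J v - p) v) ≤ |(q - J v - p) v| := by
            exact neg_le_abs _
        _ ≤ ‖q - J v - p‖ * ‖v‖ := (q - J v - p).le_opNorm v
    have hv' : 0 < ‖v‖ := norm_pos_iff.mpr hv
    rw [(hJ v).2]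
    nlinarith [sq_nonneg ‖v‖]
  refine ⟨hBmax, hdom, hnegJ, hnorm, ?_⟩
  -- convexity of midpoints in A x, via maximality
  have hmid : ∀ q1 q2, q1 ∈ A x → q2 ∈ A x → (2:ℝ)⁻¹ • (q1 + q2) ∈ A x := by
    intro q1 q2 hq1 hq2
    set m : StrongDual ℝ X := (2:ℝ)⁻¹ • (q1 + q2) with hm
    have hcomp : ∀ (a : X) (a' : StrongDual ℝ X), a' ∈ A a →
        0 ≤ (a' - m) (a - x) := by
      intro a a' ha
      have h1 := hAmono ha hq1
      have h2 := hAmono ha hq2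
      simp only [ContinuousLinearMap.sub_apply] at h1 h2 ⊢
      simp only [hm, ContinuousLinearMap.smul_apply, ContinuousLinearMap.add_apply,
        smul_eq_mul]
      linarith
    have hA'' : (fun y => A y ∪ {z | y = x ∧ z = m}) = A := by
      apply hAmax
      · intro a b a' b' ha hb
        rcases ha with ha | ⟨rfl, rfl⟩ <;> rcases hb with hb | ⟨rfl, rfl⟩
        · exact hAmono ha hb
        · exact hcomp a a' ha
        · have h := hcomp b b' hb
          simp only [ContinuousLinearMap.sub_apply, map_sub] at h ⊢
          linarith
        · simp
      · intro y; exact Set.subset_union_left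
    have : m ∈ A x ∪ {z | x = x ∧ z = m} := Or.inr ⟨rfl, rfl⟩
    rw [congrFun hA'' x] at this
    exact this
  -- the min-norm selection
  intro Bm hmin
  have hxB : x ∈ opDom B := hdom ▸ hx
  obtain ⟨hBmx, hminle⟩ := hmin x hxB
  have h1 : ‖Bm x‖ ≤ ‖J v‖ := by
    have := hminle (-(J v)) hnegJ
    simpa using this
  have h2 : ‖J v‖ ≤ ‖Bm x‖ := by
    rw [hB x] at hBmx
    obtain ⟨q, hq, hqe⟩ := hBmx
    rw [← hqe]
    simpa using hnorm q hq
  have heq : ‖Bm x‖ = ‖-(J v)‖ := by rw [norm_neg]; exact le_antisymm h1 h2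
  by_contra hne
  -- midpoint belongs to B x
  have hmidB : (1/2 : ℝ) • (Bm x + -(J v)) ∈ B x := by
    have hBmx' := hmin x hxB |>.1
    rw [hB x] at hBmx' hnegJ ⊢
    obtain ⟨q, hq, hqe⟩ := hBmx'
    obtain ⟨r, hr, hre⟩ := hnegJ
    refine ⟨(2:ℝ)⁻¹ • (q + r), hmid q r hq hr, ?_⟩
    simp only at hqe hre
    rw [← hqe, ← hre]
    ext z
    simp [smul_sub, smul_add]
    ring
  have hlt : ‖(1/2 : ℝ) • (Bm x + -(J v))‖ < ‖Bm x‖ :=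
    (norm_midpoint_lt_iff heq).mpr hne
  have := hminle _ hmidB
  linarith
end
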